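/- arXiv:2101.12045 — 10 statements merged into one kernel-verified Lean document; each statement's English description precedes it below -/
import Mathlib

section
/- The category StrProf(C) of strong profunctors on a monoidal category C and strong natural transformations between them is a monoidal category, with tensor given by profunctor composition (G • F)(X,Z) = ∫^{Y} F(X,Y) × G(Y,Z) and unit the hom profunctor Hom_C. -/
open CategoryTheory MonoidalCategory

universe w v u

/-- A `Set`-valued profunctor on `C`, given by a family of sets with a dimap action. -/
structure ProfStruct (C : Type u) [Category.{v} C] (F : C → C → Type w) where
  dimap : ∀ {X X' Y Y' : C}, (X' ⟶ X) → (Y ⟶ Y') → F X Y → F X' Y'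
  dimap_id : ∀ {X Y : C} (a : F X Y), dimap (𝟙 X) (𝟙 Y) a = a
  dimap_comp : ∀ {X X' X'' Y Y' Y'' : C} (f : X' ⟶ X) (f' : X'' ⟶ X')
    (g : Y ⟶ Y') (g' : Y' ⟶ Y'') (a : F X Y),
    dimap (f' ≫ f) (g ≫ g') a = dimap f' g' (dimap f g a)

/-- A strong profunctor: a profunctor with a right strength satisfying
(di)naturality and the coherence laws w.r.t. associator and right unitor. -/
structure StrongProfStruct (C : Type u) [Category.{v} C] [MonoidalCategory C]
    (F : C → C → Type w) extends ProfStruct C F where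
  st : ∀ {X Y : C} (Z : C), F X Y → F (X ⊗ Z) (Y ⊗ Z)
  st_natural : ∀ {X X' Y Y' : C} (Z : C) (f : X' ⟶ X) (g : Y ⟶ Y') (a : F X Y),
    st Z (dimap f g a) = dimap (f ▷ Z) (g ▷ Z) (st Z a)
  st_dinatural : ∀ {X Y Z Z' : C} (h : Z ⟶ Z') (a : F X Y),
    dimap (X ◁ h) (𝟙 (Y ⊗ Z')) (st Z' a) = dimap (𝟙 (X ⊗ Z)) (Y ◁ h) (st Z a)
  st_assoc : ∀ {X Y : C} (Z Z' : C) (a : F X Y),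
    dimap (α_ X Z Z').hom (α_ Y Z Z').inv (st (Z ⊗ Z') a) = st Z' (st Z a)
  st_unit : ∀ {X Y : C} (a : F X Y),
    st (𝟙_ C) a = dimap (ρ_ X).hom (ρ_ Y).inv a

/-- An arrow on a monoidal category `C`: a monoid in strong profunctors, i.e. a
strong profunctor with `pure` and composition satisfying the arrow laws. -/
structure ArrowStruct (C : Type u) [Category.{v} C] [MonoidalCategory C]
    (F : C → C → Type w) extends StrongProfStruct C F where
  pure : ∀ {X Y : C}, (X ⟶ Y) → F X Y
  comp : ∀ {X Y Z : C}, F X Y → F Y Z → F X Z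
  pure_natural : ∀ {X X' Y Y' : C} (f : X' ⟶ X) (g : Y ⟶ Y') (h : X ⟶ Y),
    dimap f g (pure h) = pure (f ≫ h ≫ g)
  comp_dimap : ∀ {X X' Y Z Z' : C} (f : X' ⟶ X) (g : Z ⟶ Z') (a : F X Y) (b : F Y Z),
    dimap f g (comp a b) = comp (dimap f (𝟙 Y) a) (dimap (𝟙 Y) g b)
  comp_middle : ∀ {X Y Y' Z : C} (h : Y ⟶ Y') (a : F X Y) (b : F Y' Z),
    comp (dimap (𝟙 X) h a) b = comp a (dimap h (𝟙 Z) b)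
  comp_assoc : ∀ {W X Y Z : C} (a : F W X) (b : F X Y) (c : F Y Z),
    comp (comp a b) c = comp a (comp b c)
  pure_comp : ∀ {X Y : C} (a : F X Y), comp (pure (𝟙 X)) a = a
  comp_pure : ∀ {X Y : C} (a : F X Y), comp a (pure (𝟙 Y)) = a
  pure_st : ∀ {X Y : C} (Z : C) (f : X ⟶ Y), st Z (pure f) = pure (f ▷ Z)
  comp_st : ∀ {X Y Z : C} (W : C) (a : F X Y) (b : F Y Z),
    st W (comp a b) = comp (st W a) (st W b)

variable {C : Type u} [Category.{v} C] [MonoidalCategory C]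

/-- The left strength induced from the right strength via the symmetry. -/
def StrongProfStruct.lst [SymmetricCategory C] {F : C → C → Type w}
    (S : StrongProfStruct C F) {X Y : C} (Z : C) (a : F X Y) : F (Z ⊗ X) (Z ⊗ Y) :=
  S.dimap (β_ Z X).hom (β_ Y Z).hom (S.st Z a)

/-- A commutative arrow: an arrow for which the two parallel compositions,
defined via left/right strength and composition, agree. -/
structure CommArrowStruct (C : Type u) [Category.{v} C] [MonoidalCategory C]
    [SymmetricCategory C] (F : C → C → Type w) extends ArrowStruct C F where
  comm : ∀ {X Y X' Y' : C} (a : F X Y) (b : F X' Y'),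
    comp (st X' a) (StrongProfStruct.lst toStrongProfStruct Y b) =
      comp (StrongProfStruct.lst toStrongProfStruct X b) (st Y' a)

/-- Bundled strong profunctors on `C`. -/
structure StrongProf (C : Type u) [Category.{v} C] [MonoidalCategory C] :
    Type ((max u v) + 1) where
  obj : C → C → Type (max u v)
  str : StrongProfStruct C obj

/-- Strong natural transformations between strong profunctors. -/
@[ext]
structure StrongNat {C : Type u} [Category.{v} C] [MonoidalCategory C]
    (F G : StrongProf C) where
  app : ∀ (X Y : C), F.obj X Y → G.obj X Y
  natural : ∀ {X X' Y Y' : C} (f : X' ⟶ X) (g : Y ⟶ Y') (a : F.obj X Y),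
    app X' Y' (F.str.dimap f g a) = G.str.dimap f g (app X Y a)
  strong : ∀ {X Y : C} (Z : C) (a : F.obj X Y),
    app (X ⊗ Z) (Y ⊗ Z) (F.str.st Z a) = G.str.st Z (app X Y a)

/-- The category of strong profunctors and strong natural transformations. -/
instance StrongProf.category (C : Type u) [Category.{v} C] [MonoidalCategory C] :
    Category (StrongProf C) where
  Hom := StrongNat
  id F := ⟨fun _ _ a => a, fun _ _ _ => rfl, fun _ _ => rfl⟩
  comp τ σ := ⟨fun X Y a => σ.app X Y (τ.app X Y a),
    fun f g a => by (try simp only []); rw [τ.natural, σ.natural],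
    fun Z a => by (try simp only []); rw [τ.strong, σ.strong]⟩

/-- The coend formula for profunctor composition:
`(G • F)(X,Z) = ∫^Y F(X,Y) × G(Y,Z)`. -/
def ProfComp {C : Type u} [Category.{v} C] [MonoidalCategory C]
    (F G : StrongProf C) (X Z : C) : Type (max u v) :=
  Quot (fun (a b : Σ Y : C, F.obj X Y × G.obj Y Z) =>
    ∃ h : a.1 ⟶ b.1,
      b.2.1 = F.str.dimap (𝟙 X) h a.2.1 ∧ a.2.2 = G.str.dimap h (𝟙 Z) b.2.2)
namespace SPAux

set_option linter.unusedSectionVars false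

variable {C : Type u} [Category.{v} C] [MonoidalCategory C]

theorem dd {F : C → C → Type w} (S : ProfStruct C F) {X X' X'' Y Y' Y'' : C}
    (f : X' ⟶ X) (f' : X'' ⟶ X') (g : Y ⟶ Y') (g' : Y' ⟶ Y'') (a : F X Y) :
    S.dimap f' g' (S.dimap f g a) = S.dimap (f' ≫ f) (g ≫ g') a :=
  (S.dimap_comp f f' g g' a).symm

/-- The hom profunctor, the monoidal unit. -/
def homProf (C : Type u) [Category.{v} C] [MonoidalCategory C] : StrongProf C where
  obj X Y := ULift.{max u v} (X ⟶ Y)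
  str :=
  { dimap := fun f g h => ⟨f ≫ h.down ≫ g⟩
    dimap_id := fun a => by simp
    dimap_comp := fun f f' g g' a => by simp
    st := fun Z h => ⟨h.down ▷ Z⟩
    st_natural := fun Z f g a => by simp
    st_dinatural := fun h a => by simp [whisker_exchange]
    st_assoc := fun Z Z' a => by
      simp [ULift.ext_iff, whisker_assoc]
    st_unit := fun a => by simp [ULift.ext_iff] }

section Comp

variable (F G : StrongProf C)

/-- Constructor for elements of the coend. -/
def mk {X Z : C} (Y : C) (a : F.obj X Y) (b : G.obj Y Z) : ProfComp F G X Z :=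
  Quot.mk _ ⟨Y, a, b⟩

theorem glue {X Z Y Y' : C} (h : Y ⟶ Y') (a : F.obj X Y) (b : G.obj Y' Z) :
    mk F G Y a (G.str.dimap h (𝟙 Z) b) = mk F G Y' (F.str.dimap (𝟙 X) h a) b :=
  Quot.sound ⟨h, rfl, rfl⟩

theorem glue' {X Z Y Y' : C} (h : Y ⟶ Y') {a : F.obj X Y} {b : G.obj Y' Z}
    {u : F.obj X Y'} {v : G.obj Y Z}
    (hu : u = F.str.dimap (𝟙 X) h a) (hv : v = G.str.dimap h (𝟙 Z) b) :
    mk F G Y a v = mk F G Y' u b := by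
  subst hu; subst hv; exact glue F G h a b

theorem mk_congr {X Z Y : C} {a a' : F.obj X Y} {b b' : G.obj Y Z}
    (ha : a = a') (hb : b = b') : mk F G Y a b = mk F G Y a' b' := by
  subst ha; subst hb; rfl

/-- The strong profunctor structure on the composite. -/
def compStr : StrongProfStruct C (ProfComp F G) where
  dimap {X X' Z Z'} f g := Quot.lift
    (fun p => mk F G p.1 (F.str.dimap f (𝟙 p.1) p.2.1) (G.str.dimap (𝟙 p.1) g p.2.2))
    (by
      rintro ⟨Y, a₁, a₂⟩ ⟨Y', b₁, b₂⟩ ⟨h, hb, ha⟩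
      dsimp only at hb ha ⊢
      rw [hb, ha]
      exact glue' F G h (by simp [dd]) (by simp [dd]))
  dimap_id := by
    rintro X Z ⟨Y, a, b⟩
    exact mk_congr F G (F.str.dimap_id a) (G.str.dimap_id b)
  dimap_comp := by
    rintro X X' X'' Z Z' Z'' f f' g g' ⟨Y, a, b⟩
    refine mk_congr F G ?_ ?_ <;> simp [dd]
  st {X Z} W := Quot.lift
    (fun p => mk F G (p.1 ⊗ W) (F.str.st W p.2.1) (G.str.st W p.2.2))
    (by
      rintro ⟨Y, a₁, a₂⟩ ⟨Y', b₁, b₂⟩ ⟨h, hb, ha⟩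
      dsimp only at hb ha ⊢
      rw [hb, ha]
      exact glue' F G (h ▷ W)
        (by rw [F.str.st_natural]; simp) (by rw [G.str.st_natural]; simp))
  st_natural := by
    rintro X X' Z Z' W f g ⟨Y, a, b⟩
    refine mk_congr F G ?_ ?_
    · rw [F.str.st_natural]; simp
    · rw [G.str.st_natural]; simp
  st_dinatural := by
    rintro X Z W W' h ⟨Y, a, b⟩
    show mk F G _ (F.str.dimap (X ◁ h) (𝟙 _) (F.str.st W' a))
        (G.str.dimap (𝟙 _) (𝟙 _) (G.str.st W' b)) =
      mk F G _ (F.str.dimap (𝟙 _) (𝟙 _) (F.str.st W a))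
        (G.str.dimap (𝟙 _) (Z ◁ h) (G.str.st W b))
    rw [F.str.st_dinatural, G.str.dimap_id, F.str.dimap_id, ← G.str.st_dinatural]
    exact (glue F G (Y ◁ h) (F.str.st W a) (G.str.st W' b)).symm
  st_assoc := by
    rintro X Z W W' ⟨Y, a, b⟩
    show mk F G (Y ⊗ W ⊗ W')
        (F.str.dimap (α_ X W W').hom (𝟙 (Y ⊗ W ⊗ W')) (F.str.st (W ⊗ W') a))
        (G.str.dimap (𝟙 (Y ⊗ W ⊗ W')) (α_ Z W W').inv (G.str.st (W ⊗ W') b)) =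
      mk F G ((Y ⊗ W) ⊗ W') (F.str.st W' (F.str.st W a)) (G.str.st W' (G.str.st W b))
    refine (glue' F G (α_ Y W W').hom ?_ ?_).symm
    · rw [← F.str.st_assoc, dd]; simp
    · rw [dd]; simp only [Category.comp_id]; exact (G.str.st_assoc W W' b).symm
  st_unit := by
    rintro X Z ⟨Y, a, b⟩
    show mk F G (Y ⊗ 𝟙_ C) (F.str.st (𝟙_ C) a) (G.str.st (𝟙_ C) b) =
      mk F G Y (F.str.dimap (ρ_ X).hom (𝟙 Y) a) (G.str.dimap (𝟙 Y) (ρ_ Z).inv b)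
    exact (glue' F G (ρ_ Y).inv (by rw [F.str.st_unit, dd]; simp)
      (by rw [G.str.st_unit, dd]; simp)).symm

end Comp

end SPAux
namespace SPAux

set_option linter.unusedSectionVars false
set_option maxHeartbeats 1000000

variable {C : Type u} [Category.{v} C] [MonoidalCategory C]

/-- Tensor product of strong profunctors (note the order swap). -/
def tobj (A B : StrongProf C) : StrongProf C := ⟨ProfComp B A, compStr B A⟩

theorem natExt {F G : StrongProf C} {τ σ : StrongNat F G}
    (h : ∀ X Z a, τ.app X Z a = σ.app X Z a) : τ = σ :=
  StrongNat.ext (funext fun X => funext fun Z => funext (h X Z))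

/-- Functoriality of composition. -/
def compNat {A A' B B' : StrongProf C} (σ : StrongNat A A') (τ : StrongNat B B') :
    StrongNat (tobj A B) (tobj A' B') where
  app X Z := Quot.lift
    (fun p => mk B' A' p.1 (τ.app X p.1 p.2.1) (σ.app p.1 Z p.2.2))
    (by
      rintro ⟨Y, a₁, a₂⟩ ⟨Y', b₁, b₂⟩ ⟨h, hb, ha⟩
      dsimp only at hb ha ⊢
      rw [hb, ha]
      exact glue' B' A' h (by rw [τ.natural]) (by rw [σ.natural]))
  natural := by
    rintro X X' Z Z' f g ⟨Y, a, b⟩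
    exact mk_congr B' A' (τ.natural f (𝟙 Y) a) (σ.natural (𝟙 Y) g b)
  strong := by
    rintro X Z W ⟨Y, a, b⟩
    exact mk_congr B' A' (τ.strong W a) (σ.strong W b)

section Assoc

variable (A B D : StrongProf C)

/-- Auxiliary map for the associator. -/
def aApp {X Z Y : C} (d : D.obj X Y) : ProfComp B A Y Z → (tobj A (tobj B D)).obj X Z :=
  Quot.lift (fun q => mk (tobj B D) A q.1 (mk D B Y d q.2.1) q.2.2)
    (by
      rintro ⟨W, b₁, a₁⟩ ⟨W', b₂, a₂⟩ ⟨h, hb, ha⟩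
      dsimp only at hb ha ⊢
      rw [hb, ha]
      exact glue' (tobj B D) A h (mk_congr D B (D.str.dimap_id d).symm rfl) rfl)

theorem aApp_glue {X Z Y Y' : C} (h : Y ⟶ Y') (d : D.obj X Y) (q : ProfComp B A Y' Z) :
    aApp A B D d ((compStr B A).dimap h (𝟙 Z) q) =
      aApp A B D (D.str.dimap (𝟙 X) h d) q := by
  induction q using Quot.ind with
  | _ p =>
    obtain ⟨W, b, a⟩ := p
    refine Eq.trans ?_ rfl
    show mk (tobj B D) A W (mk D B Y d (B.str.dimap h (𝟙 W) b)) (A.str.dimap (𝟙 W) (𝟙 Z) a) =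
      mk (tobj B D) A W (mk D B Y' (D.str.dimap (𝟙 X) h d) b) a
    exact mk_congr (tobj B D) A (glue D B h d b) (A.str.dimap_id a)

/-- The associator, forward direction. -/
def assocHom : StrongNat (tobj (tobj A B) D) (tobj A (tobj B D)) where
  app X Z := Quot.lift (fun p => aApp A B D p.2.1 p.2.2)
    (by
      rintro ⟨Y, d₁, q₁⟩ ⟨Y', d₂, q₂⟩ ⟨h, hd, hq⟩
      dsimp only at hd hq ⊢
      rw [hd, hq]
      exact aApp_glue A B D h d₁ q₂)
  natural := by
    rintro X X' Z Z' f g ⟨Y, d, q⟩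
    induction q using Quot.ind with
    | _ p => obtain ⟨W, b, a⟩ := p; rfl
  strong := by
    rintro X Z W ⟨Y, d, q⟩
    induction q using Quot.ind with
    | _ p => obtain ⟨V, b, a⟩ := p; rfl

/-- Auxiliary map for the inverse associator. -/
def bApp {X Z W : C} (a : A.obj W Z) : ProfComp D B X W → (tobj (tobj A B) D).obj X Z :=
  Quot.lift (fun q => mk D (tobj A B) q.1 q.2.1 (mk B A W q.2.2 a))
    (by
      rintro ⟨Y, d₁, b₁⟩ ⟨Y', d₂, b₂⟩ ⟨h, hd, hb⟩
      dsimp only at hd hb ⊢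
      rw [hd, hb]
      exact glue' D (tobj A B) h rfl (mk_congr B A rfl (A.str.dimap_id a).symm))

theorem bApp_glue {X Z W W' : C} (h : W ⟶ W') (a : A.obj W' Z) (q : ProfComp D B X W) :
    bApp A B D (A.str.dimap h (𝟙 Z) a) q =
      bApp A B D a ((compStr D B).dimap (𝟙 X) h q) := by
  induction q using Quot.ind with
  | _ p =>
    obtain ⟨Y, d, b⟩ := p
    show mk D (tobj A B) Y d (mk B A W b (A.str.dimap h (𝟙 Z) a)) =
      mk D (tobj A B) Y (D.str.dimap (𝟙 X) (𝟙 Y) d) (mk B A W' (B.str.dimap (𝟙 Y) h b) a)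
    exact mk_congr D (tobj A B) (D.str.dimap_id d).symm (glue B A h b a)

/-- The associator, inverse direction. -/
def assocInv : StrongNat (tobj A (tobj B D)) (tobj (tobj A B) D) where
  app X Z := Quot.lift (fun p => bApp A B D p.2.2 p.2.1)
    (by
      rintro ⟨W, q₁, a₁⟩ ⟨W', q₂, a₂⟩ ⟨h, hq, ha⟩
      dsimp only at hq ha ⊢
      rw [hq, ha]
      exact bApp_glue A B D h a₂ q₁)
  natural := by
    rintro X X' Z Z' f g ⟨W, q, a⟩
    induction q using Quot.ind with
    | _ p => obtain ⟨Y, d, b⟩ := p; rfl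
  strong := by
    rintro X Z W ⟨V, q, a⟩
    induction q using Quot.ind with
    | _ p => obtain ⟨Y, d, b⟩ := p; rfl

end Assoc

section Unitors

variable (A : StrongProf C)

/-- Left unitor, forward direction. -/
def lHom : StrongNat (tobj (homProf C) A) (A) where
  app X Z := Quot.lift (fun p => A.str.dimap (𝟙 X) p.2.2.down p.2.1)
    (by
      rintro ⟨Y, a₁, k₁⟩ ⟨Y', a₂, k₂⟩ ⟨h, ha, hk⟩
      dsimp only at ha hk ⊢
      rw [ha, hk]
      simp [homProf, dd])
  natural := by
    rintro X X' Z Z' f g ⟨Y, a, k⟩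
    show A.str.dimap (𝟙 X') (𝟙 Y ≫ k.down ≫ g) (A.str.dimap f (𝟙 Y) a) =
      A.str.dimap f g (A.str.dimap (𝟙 X) k.down a)
    simp [dd]
  strong := by
    rintro X Z W ⟨Y, a, k⟩
    show A.str.dimap (𝟙 (X ⊗ W)) (k.down ▷ W) (A.str.st W a) =
      A.str.st W (A.str.dimap (𝟙 X) k.down a)
    rw [A.str.st_natural]
    simp

/-- Left unitor, inverse direction. -/
def lInv : StrongNat A (tobj (homProf C) A) where
  app X Z a := mk A (homProf C) Z a ⟨𝟙 Z⟩
  natural := by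
    rintro X X' Z Z' f g a
    show mk A (homProf C) Z' (A.str.dimap f g a) ⟨𝟙 Z'⟩ =
      mk A (homProf C) Z (A.str.dimap f (𝟙 Z) a) ⟨𝟙 Z ≫ 𝟙 Z ≫ g⟩
    exact (glue' A (homProf C) g (by simp [dd]) (by simp [homProf])).symm
  strong := by
    rintro X Z W a
    exact mk_congr A (homProf C) rfl (by simp [homProf, ULift.ext_iff])

/-- Right unitor, forward direction. -/
def rHom : StrongNat (tobj A (homProf C)) A where
  app X Z := Quot.lift (fun p => A.str.dimap p.2.1.down (𝟙 Z) p.2.2)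
    (by
      rintro ⟨Y, k₁, a₁⟩ ⟨Y', k₂, a₂⟩ ⟨h, hk, ha⟩
      dsimp only at hk ha ⊢
      rw [hk, ha]
      simp [homProf, dd])
  natural := by
    rintro X X' Z Z' f g ⟨Y, k, a⟩
    show A.str.dimap (f ≫ k.down ≫ 𝟙 Y) (𝟙 Z') (A.str.dimap (𝟙 Y) g a) =
      A.str.dimap f g (A.str.dimap k.down (𝟙 Z) a)
    simp [dd]
  strong := by
    rintro X Z W ⟨Y, k, a⟩
    show A.str.dimap (k.down ▷ W) (𝟙 (Z ⊗ W)) (A.str.st W a) =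
      A.str.st W (A.str.dimap k.down (𝟙 Z) a)
    rw [A.str.st_natural]
    simp

/-- Right unitor, inverse direction. -/
def rInv : StrongNat A (tobj A (homProf C)) where
  app X Z a := mk (homProf C) A X ⟨𝟙 X⟩ a
  natural := by
    rintro X X' Z Z' f g a
    show mk (homProf C) A X' ⟨𝟙 X'⟩ (A.str.dimap f g a) =
      mk (homProf C) A X ⟨f ≫ 𝟙 X ≫ 𝟙 X⟩ (A.str.dimap (𝟙 X) g a)
    exact glue' (homProf C) A f (by simp [homProf]) (by simp [dd])
  strong := by
    rintro X Z W a
    exact mk_congr (homProf C) A (by simp [homProf, ULift.ext_iff]) rfl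

end Unitors

end SPAux
namespace SPAux

set_option linter.unusedSectionVars false
set_option maxHeartbeats 1000000

variable {C : Type u} [Category.{v} C] [MonoidalCategory C]

/-- The associator isomorphism. -/
def assocIso (A B D : StrongProf C) : tobj (tobj A B) D ≅ tobj A (tobj B D) where
  hom := assocHom A B D
  inv := assocInv A B D
  hom_inv_id := by
    refine natExt fun X Z a => ?_
    induction a using Quot.ind with
    | _ p =>
      obtain ⟨Y, d, q⟩ := p
      induction q using Quot.ind with
      | _ r => obtain ⟨W, b, a⟩ := r; rfl
  inv_hom_id := by
    refine natExt fun X Z a => ?_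
    induction a using Quot.ind with
    | _ p =>
      obtain ⟨W, q, a⟩ := p
      induction q using Quot.ind with
      | _ r => obtain ⟨Y, d, b⟩ := r; rfl

/-- The left unitor isomorphism. -/
def lIso (A : StrongProf C) : tobj (homProf C) A ≅ A where
  hom := lHom A
  inv := lInv A
  hom_inv_id := by
    refine natExt fun X Z a => ?_
    induction a using Quot.ind with
    | _ p =>
      obtain ⟨Y, a, k⟩ := p
      exact (glue' A (homProf C) k.down rfl (by simp [homProf, ULift.ext_iff]; rfl)).symm
  inv_hom_id := by
    refine natExt fun X Z a => ?_
    exact A.str.dimap_id a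

/-- The right unitor isomorphism. -/
def rIso (A : StrongProf C) : tobj A (homProf C) ≅ A where
  hom := rHom A
  inv := rInv A
  hom_inv_id := by
    refine natExt fun X Z a => ?_
    induction a using Quot.ind with
    | _ p =>
      obtain ⟨Y, k, a⟩ := p
      exact glue' (homProf C) A k.down (by simp [homProf, ULift.ext_iff]; rfl) rfl
  inv_hom_id := by
    refine natExt fun X Z a => ?_
    exact A.str.dimap_id a

/-- The monoidal structure on strong profunctors. -/
def M : MonoidalCategory (StrongProf C) where
  tensorObj := tobj
  whiskerLeft A _ _ τ := compNat (𝟙 A) τ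
  whiskerRight τ B := compNat τ (𝟙 B)
  tensorUnit := homProf C
  associator := assocIso
  leftUnitor := lIso
  rightUnitor := rIso
  tensorHom_def _ _ := rfl
  id_tensorHom_id A B := by
    refine natExt fun X Z a => ?_
    induction a using Quot.ind with
    | _ p => rfl
  tensorHom_comp_tensorHom f₁ f₂ g₁ g₂ := by
    refine natExt fun X Z a => ?_
    induction a using Quot.ind with
    | _ p => rfl
  whiskerLeft_id A B := by
    refine natExt fun X Z a => ?_
    induction a using Quot.ind with
    | _ p => rfl
  id_whiskerRight A B := by
    refine natExt fun X Z a => ?_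
    induction a using Quot.ind with
    | _ p => rfl
  associator_naturality f₁ f₂ f₃ := by
    refine natExt fun X Z a => ?_
    induction a using Quot.ind with
    | _ p =>
      obtain ⟨Y, d, q⟩ := p
      induction q using Quot.ind with
      | _ r => obtain ⟨W, b, a⟩ := r; rfl
  leftUnitor_naturality {A B} τ := by
    refine natExt fun X Z a => ?_
    induction a using Quot.ind with
    | _ p =>
      obtain ⟨Y, a, k⟩ := p
      exact (τ.natural (𝟙 X) k.down a).symm
  rightUnitor_naturality {A B} τ := by
    refine natExt fun X Z a => ?_
    induction a using Quot.ind with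
    | _ p =>
      obtain ⟨Y, k, a⟩ := p
      exact (τ.natural k.down (𝟙 Z) a).symm
  pentagon A B D E := by
    refine natExt fun X Z a => ?_
    induction a using Quot.ind with
    | _ p =>
      obtain ⟨Y, e, q⟩ := p
      induction q using Quot.ind with
      | _ r =>
        obtain ⟨W, d, s⟩ := r
        induction s using Quot.ind with
        | _ t => obtain ⟨V, b, a⟩ := t; rfl
  triangle A B := by
    refine natExt fun X Z a => ?_
    induction a using Quot.ind with
    | _ p =>
      obtain ⟨Y, b, q⟩ := p
      induction q using Quot.ind with
      | _ r =>
        obtain ⟨W, k, a⟩ := r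
        exact (glue B A k.down b a).symm

end SPAux

/-- the category of strong profunctors on a monoidal category `C`
is monoidal, with tensor given by profunctor composition
`(G • F)(X,Z) = ∫^Y F(X,Y) × G(Y,Z)` and unit the hom profunctor. -/
theorem strongProf_monoidal (C : Type u) [Category.{v} C] [MonoidalCategory C] :
    ∃ M : MonoidalCategory (StrongProf C),
      (∀ F G : StrongProf C,
        (MonoidalCategoryStruct.tensorObj (self := M.toMonoidalCategoryStruct) G F).obj =
          fun X Z => ProfComp F G X Z) ∧
      (MonoidalCategoryStruct.tensorUnit (self := M.toMonoidalCategoryStruct)).obj =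
        fun X Y : C => ULift.{max u v} (X ⟶ Y) := by
  exact ⟨SPAux.M, fun _ _ => rfl, rfl⟩
end

section
/- Every commutative arrow A on a symmetric monoidal category C gives rise to a symmetric monoidal category whose objects are the objects of C and whose hom-sets are A(X,Y), with composition given by the arrow composition, identities given by pure of identities, and tensor on morphisms defined via the left and right strengths; moreover there is an identity-on-objects strict monoidal functor J : C → A given by pure. -/
open CategoryTheory MonoidalCategory

universe w v u

variable {C : Type u} [Category.{v} C] [MonoidalCategory C]

/-- The type of objects of the (symmetric monoidal) category induced by a
commutative arrow `A`: the same objects as `C`. -/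
def ACat {C : Type u} [Category.{v} C] [MonoidalCategory C] [SymmetricCategory C]
    {F : C → C → Type w} (_ : CommArrowStruct C F) : Type u := C

section Aux

variable {F : C → C → Type w}

namespace CommArrowStruct

variable [SymmetricCategory C] (A : CommArrowStruct C F)

/-- Abbreviation for the left strength of a commutative arrow. -/
abbrev lst {X Y : C} (Z : C) (a : F X Y) : F (Z ⊗ X) (Z ⊗ Y) :=
  StrongProfStruct.lst A.toStrongProfStruct Z a

lemma dimap_dimap {X X' X'' Y Y' Y'' : C} (f : X' ⟶ X) (f' : X'' ⟶ X')
    (g : Y ⟶ Y') (g' : Y' ⟶ Y'') (a : F X Y) :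
    A.dimap f' g' (A.dimap f g a) = A.dimap (f' ≫ f) (g ≫ g') a :=
  (A.dimap_comp f f' g g' a).symm

lemma comp_pureL {X Y Z : C} (f : X ⟶ Y) (a : F Y Z) :
    A.comp (A.pure f) a = A.dimap f (𝟙 Z) a := by
  have h1 : A.pure f = A.dimap f (𝟙 Y) (A.pure (𝟙 Y)) := by
    rw [A.pure_natural]; simp
  have h2 : a = A.dimap (𝟙 Y) (𝟙 Z) a := (A.dimap_id a).symm
  calc A.comp (A.pure f) a
      = A.comp (A.dimap f (𝟙 Y) (A.pure (𝟙 Y))) (A.dimap (𝟙 Y) (𝟙 Z) a) := by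
        rw [← h1, ← h2]
    _ = A.dimap f (𝟙 Z) (A.comp (A.pure (𝟙 Y)) a) := (A.comp_dimap _ _ _ _).symm
    _ = A.dimap f (𝟙 Z) a := by rw [A.pure_comp]

lemma comp_pureR {X Y Z : C} (a : F X Y) (g : Y ⟶ Z) :
    A.comp a (A.pure g) = A.dimap (𝟙 X) g a := by
  have h1 : A.pure g = A.dimap (𝟙 Y) g (A.pure (𝟙 Y)) := by
    rw [A.pure_natural]; simp
  have h2 : a = A.dimap (𝟙 X) (𝟙 Y) a := (A.dimap_id a).symm
  calc A.comp a (A.pure g)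
      = A.comp (A.dimap (𝟙 X) (𝟙 Y) a) (A.dimap (𝟙 Y) g (A.pure (𝟙 Y))) := by
        rw [← h1, ← h2]
    _ = A.dimap (𝟙 X) g (A.comp a (A.pure (𝟙 Y))) := (A.comp_dimap _ _ _ _).symm
    _ = A.dimap (𝟙 X) g a := by rw [A.comp_pure]

lemma pure_pure {X Y Z : C} (f : X ⟶ Y) (g : Y ⟶ Z) :
    A.comp (A.pure f) (A.pure g) = A.pure (f ≫ g) := by
  rw [A.comp_pureL, A.pure_natural]; simp

/-- dinaturality of the strength along an isomorphism. -/
lemma st_iso {X Y Z Z' : C} (h : Z ≅ Z') (a : F X Y) :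
    A.st Z' a = A.dimap (X ◁ h.inv) (Y ◁ h.hom) (A.st Z a) := by
  have := A.st_dinatural h.hom a
  have h2 := congrArg (A.dimap (X ◁ h.inv) (𝟙 (Y ⊗ Z'))) this
  rw [A.dimap_dimap, A.dimap_dimap, ← MonoidalCategory.whiskerLeft_comp] at h2
  simpa [A.dimap_dimap, A.dimap_id] using h2

lemma st_st {X Y : C} (Z Z' : C) (a : F X Y) :
    A.st Z' (A.st Z a) =
      A.dimap (α_ X Z Z').hom (α_ Y Z Z').inv (A.st (Z ⊗ Z') a) :=
  (A.st_assoc Z Z' a).symm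

lemma pure_lst {X Y : C} (Z : C) (f : X ⟶ Y) :
    A.lst Z (A.pure f) = A.pure (Z ◁ f) := by
  unfold CommArrowStruct.lst StrongProfStruct.lst
  rw [A.pure_st, A.pure_natural]
  congr 1
  rw [← BraidedCategory.braiding_naturality_right_assoc]
  simp

lemma comp_dimapL {X X' Y Z : C} (f : X' ⟶ X) (a : F X Y) (b : F Y Z) :
    A.comp (A.dimap f (𝟙 Y) a) b = A.dimap f (𝟙 Z) (A.comp a b) := by
  rw [A.comp_dimap]
  congr 1
  exact (A.dimap_id b).symm

lemma comp_dimapR {X Y Z Z' : C} (g : Z ⟶ Z') (a : F X Y) (b : F Y Z) :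
    A.comp a (A.dimap (𝟙 Y) g b) = A.dimap (𝟙 X) g (A.comp a b) := by
  rw [A.comp_dimap]
  congr 1
  exact (A.dimap_id a).symm

lemma comp_lst {X Y Z : C} (W : C) (a : F X Y) (b : F Y Z) :
    A.lst W (A.comp a b) = A.comp (A.lst W a) (A.lst W b) := by
  unfold CommArrowStruct.lst StrongProfStruct.lst
  rw [A.comp_st]
  symm
  calc A.comp (A.dimap (β_ W X).hom (β_ Y W).hom (A.st W a))
        (A.dimap (β_ W Y).hom (β_ Z W).hom (A.st W b))
      = A.comp (A.dimap (β_ W X).hom (𝟙 _) (A.dimap (𝟙 _) (β_ Y W).hom (A.st W a)))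
          (A.dimap (β_ W Y).hom (β_ Z W).hom (A.st W b)) := by
        rw [A.dimap_dimap]; simp
    _ = A.dimap (β_ W X).hom (𝟙 _)
          (A.comp (A.dimap (𝟙 _) (β_ Y W).hom (A.st W a))
            (A.dimap (β_ W Y).hom (β_ Z W).hom (A.st W b))) := A.comp_dimapL _ _ _
    _ = A.dimap (β_ W X).hom (𝟙 _)
          (A.comp (A.st W a)
            (A.dimap (β_ Y W).hom (𝟙 _)
              (A.dimap (β_ W Y).hom (β_ Z W).hom (A.st W b)))) := by
        rw [A.comp_middle]
    _ = A.dimap (β_ W X).hom (𝟙 _)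
          (A.comp (A.st W a) (A.dimap (𝟙 _) (β_ Z W).hom (A.st W b))) := by
        rw [A.dimap_dimap]; simp
    _ = A.dimap (β_ W X).hom (β_ Z W).hom (A.comp (A.st W a) (A.st W b)) := by
        rw [A.comp_dimapR, A.dimap_dimap]; simp

lemma lst_dimap {X X' Y Y' : C} (Z : C) (f : X' ⟶ X) (g : Y ⟶ Y') (a : F X Y) :
    A.lst Z (A.dimap f g a) = A.dimap (Z ◁ f) (Z ◁ g) (A.lst Z a) := by
  unfold CommArrowStruct.lst StrongProfStruct.lst
  rw [A.st_natural]
  simp only [A.dimap_dimap]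
  congr 1 <;> simp

/-- Exchange of right strength and associator. -/
lemma st_exchange {X Y : C} (Z Z' : C) (a : F X Y) :
    A.comp (A.st Z' (A.st Z a)) (A.pure (α_ Y Z Z').hom) =
      A.comp (A.pure (α_ X Z Z').hom) (A.st (Z ⊗ Z') a) := by
  rw [A.comp_pureR, A.comp_pureL, A.st_st, A.dimap_dimap]
  simp

/-- Exchange of left strength pairs and associator. -/
lemma lst_lst_exchange {X Y : C} (Z Z' : C) (a : F X Y) :
    A.comp (A.lst (Z ⊗ Z') a) (A.pure (α_ Z Z' Y).hom) =
      A.comp (A.pure (α_ Z Z' X).hom) (A.lst Z (A.lst Z' a)) := by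
  unfold CommArrowStruct.lst StrongProfStruct.lst
  rw [A.comp_pureR, A.comp_pureL, A.st_natural, A.st_st, A.st_iso (β_ Z Z') a]
  simp only [A.dimap_dimap]
  congr 1
  · simp only [Category.id_comp, Category.comp_id]
    rw [← SymmetricCategory.braiding_swap_eq_inv_braiding,
      BraidedCategory.braiding_tensor_right_hom]
    simp only [Category.assoc, Iso.hom_inv_id_assoc]
    rw [← BraidedCategory.braiding_tensor_left_hom_assoc,
      BraidedCategory.braiding_naturality_left_assoc,
      ← MonoidalCategory.whiskerLeft_comp]
    simp
  · simp only [Category.id_comp, Category.comp_id, Category.assoc]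
    rw [BraidedCategory.braiding_tensor_left_hom]
    try simp only [Category.assoc, Iso.hom_inv_id_assoc, Iso.inv_hom_id_assoc]
    rw [← BraidedCategory.braiding_tensor_right_hom_assoc,
      BraidedCategory.braiding_naturality_right_assoc,
      ← MonoidalCategory.comp_whiskerRight_assoc]
    simp

/-- Exchange of a right strength past a left strength via the associator. -/
lemma st_lst_exchange {X Y : C} (Z W : C) (a : F X Y) :
    A.comp (A.st W (A.lst Z a)) (A.pure (α_ Z Y W).hom) =
      A.comp (A.pure (α_ Z X W).hom) (A.lst Z (A.st W a)) := by
  unfold CommArrowStruct.lst StrongProfStruct.lst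
  rw [A.comp_pureR, A.comp_pureL, A.st_natural, A.st_st, A.st_st, A.st_iso (β_ Z W) a]
  simp only [A.dimap_dimap]
  congr 1
  · simp only [Category.id_comp, Category.comp_id]
    rw [← SymmetricCategory.braiding_swap_eq_inv_braiding,
      BraidedCategory.braiding_tensor_right_hom]
    try simp only [Category.assoc, Iso.hom_inv_id_assoc, Iso.inv_hom_id_assoc]
    rw [← MonoidalCategory.whiskerLeft_comp]
    simp
  · simp only [Category.id_comp, Category.comp_id, Category.assoc]
    rw [BraidedCategory.braiding_tensor_left_hom]
    try simp only [Category.assoc, Iso.inv_hom_id_assoc, Iso.hom_inv_id_assoc]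
    rw [← MonoidalCategory.whiskerLeft_comp_assoc]
    simp

end CommArrowStruct

end Aux

namespace CommArrowStruct

variable [SymmetricCategory C] {F : C → C → Type w} (A : CommArrowStruct C F)

lemma comm' {X Y X' Y' : C} (a : F X Y) (b : F X' Y') :
    A.comp (A.st X' a) (A.lst Y b) = A.comp (A.lst X b) (A.st Y' a) := A.comm a b

lemma pure_hom_inv {X Y : C} (f : X ≅ Y) :
    A.comp (A.pure f.hom) (A.pure f.inv) = A.pure (𝟙 X) := by
  rw [A.pure_pure, f.hom_inv_id]

lemma pure_inv_hom {X Y : C} (f : X ≅ Y) :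
    A.comp (A.pure f.inv) (A.pure f.hom) = A.pure (𝟙 Y) := by
  rw [A.pure_pure, f.inv_hom_id]

lemma tensorHom_pure {X Y X' Y' : C} (f : X ⟶ Y) (g : X' ⟶ Y') :
    A.comp (A.st X' (A.pure f)) (A.lst Y (A.pure g)) = A.pure (f ⊗ₘ g) := by
  rw [A.pure_st, A.pure_lst, A.pure_pure, ← MonoidalCategory.tensorHom_def]

lemma tensor_id' (X₁ X₂ : C) :
    A.comp (A.st X₂ (A.pure (𝟙 X₁))) (A.lst X₁ (A.pure (𝟙 X₂))) = A.pure (𝟙 (X₁ ⊗ X₂)) := by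
  rw [A.tensorHom_pure]
  congr 1
  simp

lemma id_tensorHom' (X : C) {Y₁ Y₂ : C} (f : F Y₁ Y₂) :
    A.comp (A.st Y₁ (A.pure (𝟙 X))) (A.lst X f) = A.lst X f := by
  rw [A.pure_st, MonoidalCategory.id_whiskerRight, A.pure_comp]

lemma tensorHom_id' {X₁ X₂ : C} (f : F X₁ X₂) (Y : C) :
    A.comp (A.st Y f) (A.lst X₂ (A.pure (𝟙 Y))) = A.st Y f := by
  rw [A.pure_lst, MonoidalCategory.whiskerLeft_id, A.comp_pure]

lemma tensor_comp' {X₁ Y₁ Z₁ X₂ Y₂ Z₂ : C} (f₁ : F X₁ Y₁) (f₂ : F X₂ Y₂)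
    (g₁ : F Y₁ Z₁) (g₂ : F Y₂ Z₂) :
    A.comp (A.st X₂ (A.comp f₁ g₁)) (A.lst Z₁ (A.comp f₂ g₂)) =
      A.comp (A.comp (A.st X₂ f₁) (A.lst Y₁ f₂)) (A.comp (A.st Y₂ g₁) (A.lst Z₁ g₂)) := by
  conv_lhs => rw [A.comp_st, A.comp_lst, A.comp_assoc,
    ← A.comp_assoc (A.st X₂ g₁), A.comm', A.comp_assoc]
  conv_rhs => rw [A.comp_assoc]

lemma assoc_nat' {X₁ X₂ X₃ Y₁ Y₂ Y₃ : C} (f₁ : F X₁ Y₁) (f₂ : F X₂ Y₂) (f₃ : F X₃ Y₃) :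
    A.comp (A.comp (A.st X₃ (A.comp (A.st X₂ f₁) (A.lst Y₁ f₂))) (A.lst (Y₁ ⊗ Y₂) f₃))
        (A.pure (α_ Y₁ Y₂ Y₃).hom) =
      A.comp (A.pure (α_ X₁ X₂ X₃).hom)
        (A.comp (A.st (X₂ ⊗ X₃) f₁) (A.lst Y₁ (A.comp (A.st X₃ f₂) (A.lst Y₂ f₃)))) := by
  rw [A.comp_st, A.comp_lst, A.comp_assoc, A.comp_assoc, A.lst_lst_exchange,
    ← A.comp_assoc (A.st X₃ (A.lst Y₁ f₂)), A.st_lst_exchange, A.comp_assoc,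
    ← A.comp_assoc (A.st X₃ (A.st X₂ f₁)), A.st_exchange, A.comp_assoc]

lemma leftUnitor_nat' {X Y : C} (f : F X Y) :
    A.comp (A.comp (A.st X (A.pure (𝟙 (𝟙_ C)))) (A.lst (𝟙_ C) f)) (A.pure (λ_ Y).hom) =
      A.comp (A.pure (λ_ X).hom) f := by
  rw [A.pure_st, MonoidalCategory.id_whiskerRight, A.pure_comp]
  unfold CommArrowStruct.lst StrongProfStruct.lst
  rw [A.st_unit, A.comp_pureR, A.comp_pureL]
  simp only [A.dimap_dimap]
  congr 1
  · simp [braiding_rightUnitor]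
  · simp [braiding_leftUnitor]

lemma rightUnitor_nat' {X Y : C} (f : F X Y) :
    A.comp (A.comp (A.st (𝟙_ C) f) (A.lst Y (A.pure (𝟙 (𝟙_ C))))) (A.pure (ρ_ Y).hom) =
      A.comp (A.pure (ρ_ X).hom) f := by
  rw [A.pure_lst, MonoidalCategory.whiskerLeft_id, A.comp_pure, A.st_unit,
    A.comp_pureR, A.comp_pureL]
  simp only [A.dimap_dimap]
  congr 1 <;> simp

lemma pentagon' (W X Y Z : C) :
    A.comp (A.comp (A.st Z (A.pure (α_ W X Y).hom)) (A.lst (W ⊗ (X ⊗ Y)) (A.pure (𝟙 Z))))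
        (A.comp (A.pure (α_ W (X ⊗ Y) Z).hom)
          (A.comp (A.st ((X ⊗ Y) ⊗ Z) (A.pure (𝟙 W))) (A.lst W (A.pure (α_ X Y Z).hom)))) =
      A.comp (A.pure (α_ (W ⊗ X) Y Z).hom) (A.pure (α_ W X (Y ⊗ Z)).hom) := by
  rw [A.tensorHom_pure, A.tensorHom_pure, A.pure_pure, A.pure_pure, A.pure_pure]
  congr 1
  simp

lemma triangle' (X Y : C) :
    A.comp (A.pure (α_ X (𝟙_ C) Y).hom)
        (A.comp (A.st (𝟙_ C ⊗ Y) (A.pure (𝟙 X))) (A.lst X (A.pure (λ_ Y).hom))) =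
      A.comp (A.st Y (A.pure (ρ_ X).hom)) (A.lst X (A.pure (𝟙 Y))) := by
  rw [A.tensorHom_pure, A.tensorHom_pure, A.pure_pure]
  congr 1
  simp

lemma braid_nat_left' {X Y : C} (f : F X Y) (Z : C) :
    A.comp (A.st Z f) (A.pure (β_ Y Z).hom) = A.comp (A.pure (β_ X Z).hom) (A.lst Z f) := by
  unfold CommArrowStruct.lst StrongProfStruct.lst
  rw [A.comp_pureR, A.comp_pureL]
  simp only [A.dimap_dimap]
  congr 1 <;> simp

lemma braid_nat_right' {X Y : C} (f : F X Y) (Z : C) :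
    A.comp (A.lst Z f) (A.pure (β_ Z Y).hom) = A.comp (A.pure (β_ Z X).hom) (A.st Z f) := by
  unfold CommArrowStruct.lst StrongProfStruct.lst
  rw [A.comp_pureR, A.comp_pureL]
  simp only [A.dimap_dimap]
  congr 1 <;> simp

lemma hex_fwd' (X Y Z : C) :
    A.comp (A.pure (α_ X Y Z).hom)
        (A.comp (A.pure (β_ X (Y ⊗ Z)).hom) (A.pure (α_ Y Z X).hom)) =
      A.comp (A.st Z (A.pure (β_ X Y).hom))
        (A.comp (A.pure (α_ Y X Z).hom) (A.lst Y (A.pure (β_ X Z).hom))) := by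
  rw [A.pure_st, A.pure_lst, A.pure_pure, A.pure_pure, A.pure_pure, A.pure_pure]
  exact congrArg A.pure (BraidedCategory.hexagon_forward X Y Z)

lemma hex_rev' (X Y Z : C) :
    A.comp (A.pure (α_ X Y Z).inv)
        (A.comp (A.pure (β_ (X ⊗ Y) Z).hom) (A.pure (α_ Z X Y).inv)) =
      A.comp (A.lst X (A.pure (β_ Y Z).hom))
        (A.comp (A.pure (α_ X Z Y).inv) (A.st Y (A.pure (β_ X Z).hom))) := by
  rw [A.pure_st, A.pure_lst, A.pure_pure, A.pure_pure, A.pure_pure, A.pure_pure]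
  exact congrArg A.pure (BraidedCategory.hexagon_reverse X Y Z)

lemma symmetry' (X Y : C) :
    A.comp (A.pure (β_ X Y).hom) (A.pure (β_ Y X).hom) = A.pure (𝟙 (X ⊗ Y)) := by
  rw [A.pure_pure]
  simp

/-- The category structure induced by a commutative arrow. -/
def aCategory : Category.{w} (ACat A) where
  Hom X Y := F X Y
  id := fun (X : C) => A.pure (𝟙 X)
  comp := fun f g => A.comp f g
  id_comp := fun f => A.pure_comp f
  comp_id := fun f => A.comp_pure f
  assoc := fun f g h => A.comp_assoc f g h

/-- Tensor product on objects. -/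
def aTensorObj (X Y : ACat A) : ACat A := ((X : C) ⊗ (Y : C) : C)

/-- `pure` of an isomorphism is an isomorphism in `ACat A`. -/
def pureIso {X Y : C} (f : X ≅ Y) : @Iso (ACat A) A.aCategory X Y :=
  letI : Category.{w} (ACat A) := A.aCategory
  { hom := A.pure f.hom
    inv := A.pure f.inv
    hom_inv_id := by exact A.pure_hom_inv f
    inv_hom_id := by exact A.pure_inv_hom f }

/-- The monoidal structure induced by a commutative arrow. -/
def aMonoidalStruct : @MonoidalCategoryStruct (ACat A) (A.aCategory) :=
  letI : Category.{w} (ACat A) := A.aCategory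
  { tensorObj := fun X Y => A.aTensorObj X Y
    whiskerLeft := fun X {_ _} f => A.lst X f
    whiskerRight := fun {_ _} f Z => A.st Z f
    tensorHom := fun {_ _ X₂ _} f g => A.comp (A.st X₂ f) (A.lst _ g)
    tensorUnit := (𝟙_ C : C)
    associator := fun (X Y Z : C) => A.pureIso (α_ X Y Z)
    leftUnitor := fun (X : C) => A.pureIso (λ_ X)
    rightUnitor := fun (X : C) => A.pureIso (ρ_ X) }

/-- The monoidal category induced by a commutative arrow. -/
def aMonoidal : @MonoidalCategory (ACat A) (A.aCategory) :=
  letI : Category.{w} (ACat A) := A.aCategory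
  letI : MonoidalCategoryStruct (ACat A) := A.aMonoidalStruct
  MonoidalCategory.ofTensorHom
    (id_tensorHom_id := fun X₁ X₂ => by exact A.tensor_id' X₁ X₂)
    (id_tensorHom := fun X _ _ f => by exact A.id_tensorHom' X f)
    (tensorHom_id := fun f Y => by exact A.tensorHom_id' f Y)
    (tensorHom_comp_tensorHom := fun f₁ f₂ g₁ g₂ => by exact (A.tensor_comp' f₁ f₂ g₁ g₂).symm)
    (associator_naturality := fun f₁ f₂ f₃ => by exact A.assoc_nat' f₁ f₂ f₃)
    (leftUnitor_naturality := fun f => by exact A.leftUnitor_nat' f)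
    (rightUnitor_naturality := fun f => by exact A.rightUnitor_nat' f)
    (pentagon := fun W X Y Z => by exact A.pentagon' W X Y Z)
    (triangle := fun X Y => by exact A.triangle' X Y)

/-- The symmetric monoidal category induced by a commutative arrow. -/
def aSymmetric : @SymmetricCategory (ACat A) (A.aCategory) (A.aMonoidal) :=
  letI : Category.{w} (ACat A) := A.aCategory
  letI : MonoidalCategory (ACat A) := A.aMonoidal
  { braiding := fun (X Y : C) => A.pureIso (β_ X Y)
    braiding_naturality_right := fun X {_ _} f => by exact A.braid_nat_right' f X
    braiding_naturality_left := fun {_ _} f Z => by exact A.braid_nat_left' f Z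
    hexagon_forward := fun X Y Z => by exact A.hex_fwd' X Y Z
    hexagon_reverse := fun X Y Z => by exact A.hex_rev' X Y Z
    symmetry := fun X Y => by exact A.symmetry' X Y }

/-- The identity-on-objects functor `J : C ⥤ ACat A` given by `pure`. -/
def aFunctor : @CategoryTheory.Functor C _ (ACat A) (A.aCategory) :=
  letI : Category.{w} (ACat A) := A.aCategory
  { obj := fun X => X
    map := fun f => A.pure f
    map_id := fun _ => rfl
    map_comp := fun f g => by exact (A.pure_pure f g).symm }

end CommArrowStruct

/-- every commutative arrow `A` on a symmetric monoidal category
`C` gives rise to a symmetric monoidal category with the objects of `C` and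
hom-sets `A(X,Y)`, composition the arrow composition, identities `pure (𝟙 X)`,
tensor on objects that of `C`; moreover there is an identity-on-objects strict
monoidal functor `J : C → A` given by `pure`. -/
theorem commArrow_gives_symmetric_monoidal_category
    {C : Type u} [Category.{v} C] [MonoidalCategory C] [SymmetricCategory C]
    {F : C → C → Type w} (A : CommArrowStruct C F) :
    ∃ (cat : Category.{w} (ACat A)) (mon : @MonoidalCategory (ACat A) cat)
      (_sym : @SymmetricCategory (ACat A) cat mon)
      (J : @CategoryTheory.Functor C _ (ACat A) cat),
      -- the hom-sets are the `A(X,Y)`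
      (@Quiver.Hom (ACat A) cat.toCategoryStruct.toQuiver = F) ∧
      -- identities are `pure` of identities
      HEq (fun X : ACat A => @CategoryStruct.id (ACat A) cat.toCategoryStruct X)
        (fun X : C => A.pure (𝟙 X)) ∧
      -- composition is the arrow composition
      HEq (fun (X Y Z : ACat A) (f : @Quiver.Hom (ACat A) cat.toCategoryStruct.toQuiver X Y)
              (g : @Quiver.Hom (ACat A) cat.toCategoryStruct.toQuiver Y Z) =>
            @CategoryStruct.comp (ACat A) cat.toCategoryStruct X Y Z f g)
        (fun (X Y Z : C) (a : F X Y) (b : F Y Z) => A.comp a b) ∧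
      -- the tensor product on objects is that of `C`, and the unit is that of `C`
      ((MonoidalCategoryStruct.tensorObj (self := mon.toMonoidalCategoryStruct)) =
        fun X Y : C => X ⊗ Y) ∧
      ((MonoidalCategoryStruct.tensorUnit (self := mon.toMonoidalCategoryStruct)) =
        (𝟙_ C : C)) ∧
      -- `J` is identity on objects and given by `pure` on morphisms
      (∀ X : C, J.obj X = X) ∧
      HEq (fun (X Y : C) (f : X ⟶ Y) => J.map f)
        (fun (X Y : C) (f : X ⟶ Y) => A.pure f) := by
  exact ⟨A.aCategory, A.aMonoidal, A.aSymmetric, A.aFunctor, rfl, HEq.rfl, HEq.rfl,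
    rfl, rfl, fun _ => rfl, HEq.rfl⟩
end

section
/- If W is a strong comonad on a symmetric monoidal category C, then the co-Kleisli profunctor A_W(X,Y) = Hom_C(WX, Y) is an arrow on C. -/
open CategoryTheory MonoidalCategory

universe w v u

variable {C : Type u} [Category.{v} C] [MonoidalCategory C]

/-- if `W` is a strong comonad on a symmetric monoidal category
`C`, then the co-Kleisli profunctor `A_W(X,Y) = Hom_C(W X, Y)` is an arrow on
`C` (with `pure` given by the counit, co-Kleisli composition, and strength
given by the comonad strength). -/
theorem coKleisli_arrow {C : Type u} [Category.{v} C] [MonoidalCategory C]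
    [SymmetricCategory C] (W : Comonad C)
    (s : ∀ (X Z : C), W.obj (X ⊗ Z) ⟶ W.obj X ⊗ Z)
    (s_natural : ∀ {X X' Z Z' : C} (f : X ⟶ X') (g : Z ⟶ Z'),
      W.map (f ⊗ₘ g) ≫ s X' Z' = s X Z ≫ (W.map f ⊗ₘ g))
    (s_counit : ∀ (X Z : C), s X Z ≫ (W.ε.app X ▷ Z) = W.ε.app (X ⊗ Z))
    (s_comul : ∀ (X Z : C),
      W.δ.app (X ⊗ Z) ≫ W.map (s X Z) ≫ s (W.obj X) Z = s X Z ≫ (W.δ.app X ▷ Z))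
    (s_unitor : ∀ (X : C),
      s X (𝟙_ C) = W.map (ρ_ X).hom ≫ (ρ_ (W.obj X)).inv)
    (s_assoc : ∀ (X Z Z' : C),
      W.map (α_ X Z Z').inv ≫ s (X ⊗ Z) Z' ≫ (s X Z ▷ Z') =
        s X (Z ⊗ Z') ≫ (α_ (W.obj X) Z Z').inv) :
    ∃ S : ArrowStruct C (fun X Y => W.obj X ⟶ Y),
      (∀ {X Y : C} (f : X ⟶ Y), S.pure f = W.ε.app X ≫ f) ∧
      (∀ {X Y Z : C} (a : W.obj X ⟶ Y) (b : W.obj Y ⟶ Z),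
        S.comp a b = W.δ.app X ≫ W.map a ≫ b) ∧
      (∀ {X Y : C} (Z : C) (a : W.obj X ⟶ Y),
        S.st Z a = s X Z ≫ (a ▷ Z)) := by
  
  refine ⟨{
    dimap := fun f g a => W.map f ≫ a ≫ g
    dimap_id := by intros; simp
    dimap_comp := by intros; simp
    st := fun {X Y} Z a => s X Z ≫ (a ▷ Z)
    st_natural := by
      intro X X' Y Y' Z f g a
      have h := s_natural f (𝟙 Z)
      simp only [tensorHom_id] at h
      simp only [comp_whiskerRight, ← Category.assoc, h]
    st_dinatural := by
      intro X Y Z Z' h a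
      have hn := s_natural (𝟙 X) h
      simp only [id_tensorHom, CategoryTheory.Functor.map_id] at hn
      simp only [Category.comp_id, ← Category.assoc, hn]
      simp [whisker_exchange]
    st_assoc := by
      intro X Y Z Z' a
      have h := s_assoc X Z Z'
      have h' : s (X ⊗ Z) Z' ≫ (s X Z ▷ Z') =
          W.map (α_ X Z Z').hom ≫ s X (Z ⊗ Z') ≫ (α_ (W.obj X) Z Z').inv := by
        rw [← h, ← W.map_comp_assoc]; simp
      simp only [comp_whiskerRight, Category.assoc]
      slice_rhs 1 2 => rw [h']
      simp only [Category.assoc]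
      rw [associator_inv_naturality_left]
    st_unit := by
      intro X Y a
      rw [s_unitor]
      simp
    pure := fun {X Y} f => W.ε.app X ≫ f
    comp := fun {X Y Z} a b => W.δ.app X ≫ W.map a ≫ b
    pure_natural := by
      intro X X' Y Y' f g h
      simp [← W.ε.naturality_assoc]
    comp_dimap := by
      intro X X' Y Z Z' f g a b
      simp only [Category.comp_id, CategoryTheory.Functor.map_id, Category.id_comp,
        Functor.map_comp, Category.assoc]
      have hδ : W.map f ≫ W.δ.app X = W.δ.app X' ≫ W.map (W.map f) := W.δ.naturality f
      slice_lhs 1 2 => rw [hδ]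
      simp
    comp_middle := by intros; simp
    comp_assoc := by
      intro V X Y Z a b c
      simp only [Functor.map_comp, Category.assoc, Comonad.coassoc_assoc]
      have hδ : W.map a ≫ W.δ.app X = W.δ.app (W.obj V) ≫ W.map (W.map a) :=
        W.δ.naturality a
      slice_rhs 2 3 => rw [hδ]
      simp
    pure_comp := by intros; simp
    comp_pure := by
      intro X Y a
      slice_lhs 2 3 => rw [W.ε.naturality a]
      simp
    pure_st := by
      intro X Y Z f
      simp only [comp_whiskerRight, ← Category.assoc, s_counit]
    comp_st := by
      intro X Y Z V a b
      have hn := s_natural a (𝟙 V)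
      simp only [tensorHom_id] at hn
      simp only [comp_whiskerRight, Functor.map_comp, Category.assoc]
      slice_rhs 3 4 => rw [hn]
      slice_rhs 1 3 => rw [s_comul]
      simp
  }, fun {X Y} f => rfl, fun {X Y Z} a b => rfl, fun {X Y} Z a => rfl⟩
end

section
/- The functor W : Set × Set^op → Set × Set^op defined by W(X,S) = (X, X → S) is a comonad on Set × Set^op, whose co-Kleisli category is the category of lenses: objects are pairs of sets, and morphisms (X,S) → (Y,R) are pairs (f : X → Y, g : X × R → S). -/
open CategoryTheory

universe u

/-- The endofunctor `W(X,S) = (X, X → S)` on `Set × Setᵒᵖ`. -/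
def WFun : Type u × (Type u)ᵒᵖ ⥤ Type u × (Type u)ᵒᵖ where
  obj P := (P.1, Opposite.op (P.1 → P.2.unop))
  map {P Q} f :=
    (f.1, Quiver.Hom.op (TypeCat.ofHom (fun (h : Q.1 → Q.2.unop) (x : P.1) => f.2.unop (h (f.1 x)))))
  map_id P := rfl
  map_comp f g := rfl

def Wcomonad : Comonad (Type u × (Type u)ᵒᵖ) where
  toFunctor := WFun
  ε := { app := fun P => (TypeCat.ofHom (fun x => x), Quiver.Hom.op (TypeCat.ofHom (fun (s : P.2.unop) (_ : P.1) => s)))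
         naturality := by intro P Q f; rfl }
  δ := { app := fun P => (TypeCat.ofHom (fun x => x),
           Quiver.Hom.op (TypeCat.ofHom (fun (h : P.1 → P.1 → P.2.unop) (x : P.1) => h x x)))
         naturality := by intro P Q f; rfl }
  left_counit := by intro P; rfl
  right_counit := by intro P; rfl
  coassoc := by intro P; rfl

/-- `W(X,S) = (X, X → S)` is a comonad on `Set × Setᵒᵖ` (with the
indicated counit and comultiplication), whose co-Kleisli category is the
category of lenses: morphisms `(X,S) → (Y,R)` are pairs
`(f : X → Y, g : X × R → S)`. -/
theorem wfun_comonad_coKleisli_lenses :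
    ∃ Wc : Comonad (Type u × (Type u)ᵒᵖ),
      Wc.toFunctor = WFun ∧
      -- the counit
      (∀ (X S : Type u),
        HEq (Wc.ε.app (X, Opposite.op S))
          ((TypeCat.ofHom (fun x => x), Quiver.Hom.op (TypeCat.ofHom (fun (s : S) (_ : X) => s))) :
            WFun.obj (X, Opposite.op S) ⟶ (X, Opposite.op S))) ∧
      -- the comultiplication
      (∀ (X S : Type u),
        HEq (Wc.δ.app (X, Opposite.op S))
          ((TypeCat.ofHom (fun x => x), Quiver.Hom.op (TypeCat.ofHom (fun (h : X → X → S) (x : X) => h x x))) :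
            WFun.obj (X, Opposite.op S) ⟶ WFun.obj (WFun.obj (X, Opposite.op S)))) ∧
      -- the co-Kleisli hom-sets are lenses
      (∀ (X S Y R : Type u),
        Nonempty ((WFun.obj (X, Opposite.op S) ⟶ (Y, Opposite.op R)) ≃
          ((X → Y) × (X × R → S)))) := by
  refine ⟨Wcomonad, rfl, fun X S => HEq.rfl, fun X S => HEq.rfl, fun X S Y R => ⟨?_⟩⟩
  exact { toFun := fun f => (fun x => f.1 x, fun p => f.2.unop p.2 p.1)
          invFun := fun g => (TypeCat.ofHom g.1, Quiver.Hom.op (TypeCat.ofHom (fun r x => g.2 (x, r))))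
          left_inv := fun f => rfl
          right_inv := fun g => rfl }
end

section
/- Let A be a commutative arrow on a symmetric monoidal category C. Then Fam(A)(X,Y) = colim over the groupoid of sets and bijections of J ↦ (J → A(X,Y)) is a commutative arrow: unit given by the singleton family of pure^A, composition sending (J, F) and (K, G) to (J × K, (j,k) ↦ F(j) ;^A G(k)), and strength given by postcomposing families with st^A. -/
open CategoryTheory MonoidalCategory

universe w v u

variable {C : Type u} [Category.{v} C] [MonoidalCategory C]

/-- The carrier of the `Fam` construction: families of elements of `F X Y`
indexed by a set, up to bijection of index sets. -/
def FamCarrier {C : Type u} [Category.{v} C] (F : C → C → Type w) (X Y : C) :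
    Type (w + 1) :=
  Quot (fun (a b : Σ J : Type w, J → F X Y) => ∃ e : a.1 ≃ b.1, ∀ j, a.2 j = b.2 (e j))

namespace FamAux

variable {C : Type u} [Category.{v} C] [MonoidalCategory C] [SymmetricCategory C]
variable {FA : C → C → Type w} (A : CommArrowStruct C FA)

/-- The relation on indexed families used to define `FamCarrier`. -/
abbrev Rel (X Y : C) (a b : Σ J : Type w, J → FA X Y) : Prop :=
  ∃ e : a.1 ≃ b.1, ∀ j, a.2 j = b.2 (e j)

/-- Pointwise dimap on families. -/
def fdimap {X X' Y Y' : C} (f : X' ⟶ X) (g : Y ⟶ Y') :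
    FamCarrier FA X Y → FamCarrier FA X' Y' :=
  Quot.map (fun a => ⟨a.1, fun j => A.dimap f g (a.2 j)⟩)
    (fun a b h => by obtain ⟨e, he⟩ := h; exact ⟨e, fun j => by simp [he j]⟩)

/-- Pointwise strength on families. -/
def fst {X Y : C} (Z : C) : FamCarrier FA X Y → FamCarrier FA (X ⊗ Z) (Y ⊗ Z) :=
  Quot.map (fun a => ⟨a.1, fun j => A.st Z (a.2 j)⟩)
    (fun a b h => by obtain ⟨e, he⟩ := h; exact ⟨e, fun j => by simp [he j]⟩)

/-- Composition of families, indexed by the product of index sets. -/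
def fcomp {X Y Z : C} : FamCarrier FA X Y → FamCarrier FA Y Z → FamCarrier FA X Z :=
  Quot.lift
    (fun a => Quot.lift
      (fun b => Quot.mk (Rel X Z) ⟨a.1 × b.1, fun jk => A.comp (a.2 jk.1) (b.2 jk.2)⟩)
      (fun b b' h => by
        obtain ⟨e, he⟩ := h
        exact Quot.sound ⟨(Equiv.refl a.1).prodCongr e, fun jk => by simp [he jk.2]⟩))
    (fun a a' h => by
      obtain ⟨e, he⟩ := h
      funext x
      induction x using Quot.ind with
      | _ b =>
        exact Quot.sound ⟨e.prodCongr (Equiv.refl b.1), fun jk => by simp [he jk.1]⟩)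

/-- The commutative arrow structure on `FamCarrier FA`. -/
def famStruct : CommArrowStruct C (FamCarrier FA) where
  dimap := fdimap A
  dimap_id := by
    intro X Y a
    induction a using Quot.ind with
    | _ a => exact Quot.sound ⟨Equiv.refl _, fun j => by simp [fdimap, A.dimap_id]⟩
  dimap_comp := by
    intro X X' X'' Y Y' Y'' f f' g g' a
    induction a using Quot.ind with
    | _ a => exact Quot.sound ⟨Equiv.refl _, fun j => by simp [fdimap, A.dimap_comp]⟩
  st := fst A
  st_natural := by
    intro X X' Y Y' Z f g a
    induction a using Quot.ind with
    | _ a => exact Quot.sound ⟨Equiv.refl _, fun j => by simp [fdimap, fst, A.st_natural]⟩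
  st_dinatural := by
    intro X Y Z Z' h a
    induction a using Quot.ind with
    | _ a => exact Quot.sound ⟨Equiv.refl _, fun j => by simp [fdimap, fst, A.st_dinatural]⟩
  st_assoc := by
    intro X Y Z Z' a
    induction a using Quot.ind with
    | _ a => exact Quot.sound ⟨Equiv.refl _, fun j => by simp [fdimap, fst, A.st_assoc]⟩
  st_unit := by
    intro X Y a
    induction a using Quot.ind with
    | _ a => exact Quot.sound ⟨Equiv.refl _, fun j => by simp [fdimap, fst, A.st_unit]⟩
  pure f := Quot.mk _ ⟨PUnit, fun _ => A.pure f⟩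
  comp := fcomp A
  pure_natural := by
    intro X X' Y Y' f g h
    exact Quot.sound ⟨Equiv.refl _, fun j => by simp [fdimap, A.pure_natural]⟩
  comp_dimap := by
    intro X X' Y Z Z' f g a b
    induction a using Quot.ind with
    | _ a =>
      induction b using Quot.ind with
      | _ b =>
        exact Quot.sound ⟨Equiv.refl _, fun jk => by simp [fdimap, fcomp, A.comp_dimap]⟩
  comp_middle := by
    intro X Y Y' Z h a b
    induction a using Quot.ind with
    | _ a =>
      induction b using Quot.ind with
      | _ b =>
        exact Quot.sound ⟨Equiv.refl _, fun jk => by simp [fdimap, fcomp, A.comp_middle]⟩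
  comp_assoc := by
    intro W X Y Z a b c
    induction a using Quot.ind with
    | _ a =>
      induction b using Quot.ind with
      | _ b =>
        induction c using Quot.ind with
        | _ c =>
          exact Quot.sound ⟨Equiv.prodAssoc _ _ _, fun jk => by
            simp [fcomp, Equiv.prodAssoc, A.comp_assoc]⟩
  pure_comp := by
    intro X Y a
    induction a using Quot.ind with
    | _ a =>
      exact Quot.sound ⟨Equiv.punitProd _, fun jk => by
        simp [fcomp, Equiv.punitProd, A.pure_comp]⟩
  comp_pure := by
    intro X Y a
    induction a using Quot.ind with
    | _ a =>
      exact Quot.sound ⟨Equiv.prodPUnit _, fun jk => by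
        simp [fcomp, Equiv.prodPUnit, A.comp_pure]⟩
  pure_st := by
    intro X Y Z f
    exact Quot.sound ⟨Equiv.refl _, fun j => by simp [fst, A.pure_st]⟩
  comp_st := by
    intro X Y Z W a b
    induction a using Quot.ind with
    | _ a =>
      induction b using Quot.ind with
      | _ b =>
        exact Quot.sound ⟨Equiv.refl _, fun jk => by simp [fst, fcomp, A.comp_st]⟩
  comm := by
    intro X Y X' Y' a b
    induction a using Quot.ind with
    | _ a =>
      induction b using Quot.ind with
      | _ b =>
        exact Quot.sound ⟨Equiv.prodComm _ _, fun jk => by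
          have := A.comm (a.2 jk.1) (b.2 jk.2)
          simpa [fst, fdimap, fcomp, StrongProfStruct.lst, Equiv.prodComm] using this⟩

end FamAux

/-- for a commutative arrow `A` on a symmetric monoidal category
`C`, the profunctor `Fam(A)(X,Y) = colim_{J ∈ Set_iso} (J → A(X,Y))` is a
commutative arrow, with the singleton family of `pure` as unit, composition of
families indexed by the product of the index sets, and pointwise strength. -/
theorem fam_commutative_arrow {C : Type u} [Category.{v} C] [MonoidalCategory C]
    [SymmetricCategory C] {FA : C → C → Type w} (A : CommArrowStruct C FA) :
    ∃ S : CommArrowStruct C (FamCarrier FA),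
      -- the dimap is pointwise
      (∀ {X X' Y Y' : C} (f : X' ⟶ X) (g : Y ⟶ Y') (J : Type w) (F : J → FA X Y),
        S.dimap f g (Quot.mk _ ⟨J, F⟩) =
          Quot.mk _ ⟨J, fun j => A.dimap f g (F j)⟩) ∧
      -- the unit is the singleton family of `pure`
      (∀ {X Y : C} (f : X ⟶ Y),
        S.pure f = Quot.mk _ ⟨PUnit, fun _ => A.pure f⟩) ∧
      -- composition: `(J,F);(K,G) = (J × K, (j,k) ↦ F j ; G k)`
      (∀ {X Y Z : C} (J : Type w) (F : J → FA X Y) (K : Type w) (G : K → FA Y Z),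
        S.comp (Quot.mk _ ⟨J, F⟩) (Quot.mk _ ⟨K, G⟩) =
          Quot.mk _ ⟨J × K, fun jk => A.comp (F jk.1) (G jk.2)⟩) ∧
      -- strength: postcompose the family with the strength of `A`
      (∀ {X Y : C} (Z : C) (J : Type w) (F : J → FA X Y),
        S.st Z (Quot.mk _ ⟨J, F⟩) = Quot.mk _ ⟨J, fun j => A.st Z (F j)⟩) := by
  refine ⟨FamAux.famStruct A, ?_, fun f => rfl, ?_, ?_⟩
  · intro X X' Y Y' f g J F; rfl
  · intro X Y Z J F K G; rfl
  · intro X Y Z J F; rfl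
end

section
/- Let A be an arrow on a monoidal category C and B a strong profunctor which is both a (×,1)-monoid in StrProf(C) and an A-bimodule whose actions preserve the monoid structure. Then A × B, defined by (A × B)(X,Y) = A(X,Y) × B(X,Y), is an arrow, with pure^{A×B} = pure^A × e and composition given by ((a,b),(a',b')) ↦ (a ;^A a', m(r(b,a'), ℓ(a,b'))). -/
open CategoryTheory MonoidalCategory

universe w v u

variable {C : Type u} [Category.{v} C] [MonoidalCategory C]

/-- A (strong) bimodule over an arrow `A`: a strong profunctor `B` with left and
right actions of `A` satisfying the left-action, right-action and
commuting-actions laws, compatibly with dimaps and strengths. -/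
structure BimoduleStruct {FA : C → C → Type w} {FB : C → C → Type w}
    (A : ArrowStruct C FA) (B : StrongProfStruct C FB) where
  actL : ∀ {X Y Z : C}, FA X Y → FB Y Z → FB X Z
  actR : ∀ {X Y Z : C}, FB X Y → FA Y Z → FB X Z
  actL_dimap : ∀ {X X' Y Z Z' : C} (f : X' ⟶ X) (g : Z ⟶ Z') (a : FA X Y) (b : FB Y Z),
    B.dimap f g (actL a b) = actL (A.dimap f (𝟙 Y) a) (B.dimap (𝟙 Y) g b)
  actL_middle : ∀ {X Y Y' Z : C} (h : Y ⟶ Y') (a : FA X Y) (b : FB Y' Z),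
    actL (A.dimap (𝟙 X) h a) b = actL a (B.dimap h (𝟙 Z) b)
  actL_pure : ∀ {X Y Z : C} (f : X ⟶ Y) (b : FB Y Z), actL (A.pure f) b = B.dimap f (𝟙 Z) b
  actL_comp : ∀ {W X Y Z : C} (a : FA W X) (a' : FA X Y) (b : FB Y Z),
    actL (A.comp a a') b = actL a (actL a' b)
  actR_dimap : ∀ {X X' Y Z Z' : C} (f : X' ⟶ X) (g : Z ⟶ Z') (b : FB X Y) (a : FA Y Z),
    B.dimap f g (actR b a) = actR (B.dimap f (𝟙 Y) b) (A.dimap (𝟙 Y) g a)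
  actR_middle : ∀ {X Y Y' Z : C} (h : Y ⟶ Y') (b : FB X Y) (a : FA Y' Z),
    actR (B.dimap (𝟙 X) h b) a = actR b (A.dimap h (𝟙 Z) a)
  actR_pure : ∀ {X Y Z : C} (b : FB X Y) (g : Y ⟶ Z), actR b (A.pure g) = B.dimap (𝟙 X) g b
  actR_comp : ∀ {W X Y Z : C} (b : FB W X) (a : FA X Y) (a' : FA Y Z),
    actR b (A.comp a a') = actR (actR b a) a'
  actLR : ∀ {W X Y Z : C} (a : FA W X) (b : FB X Y) (a' : FA Y Z),
    actR (actL a b) a' = actL a (actR b a')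
  actL_st : ∀ {X Y Z : C} (W : C) (a : FA X Y) (b : FB Y Z),
    B.st W (actL a b) = actL (A.st W a) (B.st W b)
  actR_st : ∀ {X Y Z : C} (W : C) (b : FB X Y) (a : FA Y Z),
    B.st W (actR b a) = actR (B.st W b) (A.st W a)

/-- A commutative bimodule: the mixed strength/action square commutes. -/
structure CommBimoduleStruct [SymmetricCategory C] {FA FB : C → C → Type w}
    (A : ArrowStruct C FA) (B : StrongProfStruct C FB) extends BimoduleStruct A B where
  comm : ∀ {X Y X' Y' : C} (a : FA X Y) (b : FB X' Y'),
    actL (A.st X' a) (B.lst Y b) = actR (B.lst X b) (A.st Y' a)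

/-- A `(×,1)`-monoid structure on a strong profunctor, i.e. a monoid w.r.t. the
pointwise cartesian structure on strong profunctors. -/
structure MonoidProfStruct {FB : C → C → Type w} (B : StrongProfStruct C FB) where
  e : ∀ (X Y : C), FB X Y
  m : ∀ {X Y : C}, FB X Y → FB X Y → FB X Y
  e_dimap : ∀ {X X' Y Y' : C} (f : X' ⟶ X) (g : Y ⟶ Y'), B.dimap f g (e X Y) = e X' Y'
  m_dimap : ∀ {X X' Y Y' : C} (f : X' ⟶ X) (g : Y ⟶ Y') (b b' : FB X Y),
    B.dimap f g (m b b') = m (B.dimap f g b) (B.dimap f g b')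
  m_assoc : ∀ {X Y : C} (b b' b'' : FB X Y), m (m b b') b'' = m b (m b' b'')
  m_unit_left : ∀ {X Y : C} (b : FB X Y), m (e X Y) b = b
  m_unit_right : ∀ {X Y : C} (b : FB X Y), m b (e X Y) = b
  e_st : ∀ (X Y Z : C), B.st Z (e X Y) = e (X ⊗ Z) (Y ⊗ Z)
  m_st : ∀ {X Y : C} (Z : C) (b b' : FB X Y), B.st Z (m b b') = m (B.st Z b) (B.st Z b')

/-- The actions of a bimodule preserve a `(×,1)`-monoid structure. -/
structure ActionsPreserveMonoid {FA FB : C → C → Type w} {A : ArrowStruct C FA}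
    {B : StrongProfStruct C FB} (Bi : BimoduleStruct A B) (Mo : MonoidProfStruct B) : Prop where
  actL_m : ∀ {X Y Z : C} (a : FA X Y) (b b' : FB Y Z),
    Bi.actL a (Mo.m b b') = Mo.m (Bi.actL a b) (Bi.actL a b')
  actL_e : ∀ {X Y Z : C} (a : FA X Y), Bi.actL a (Mo.e Y Z) = Mo.e X Z
  actR_m : ∀ {X Y Z : C} (b b' : FB X Y) (a : FA Y Z),
    Bi.actR (Mo.m b b') a = Mo.m (Bi.actR b a) (Bi.actR b' a)
  actR_e : ∀ {X Y Z : C} (a : FA Y Z), Bi.actR (Mo.e X Y) a = Mo.e X Z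

/-- if `A` is an arrow on a monoidal category `C` and `B` is a
strong profunctor which is a `(×,1)`-monoid and an `A`-bimodule whose actions
preserve the monoid structure, then `A × B` is an arrow with
`pure = pure^A × e` and composition
`((a,b),(a',b')) ↦ (a ; a', m (r(b,a'), ℓ(a,b')))`. -/
theorem bimodule_product_arrow {C : Type u} [Category.{v} C] [MonoidalCategory C]
    {FA FB : C → C → Type w} (A : ArrowStruct C FA) (B : StrongProfStruct C FB)
    (Bi : BimoduleStruct A B) (Mo : MonoidProfStruct B)
    (_hpres : ActionsPreserveMonoid Bi Mo) :
    ∃ S : ArrowStruct C (fun X Y => FA X Y × FB X Y),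
      -- the profunctor and strength structure is componentwise
      (∀ {X X' Y Y' : C} (f : X' ⟶ X) (g : Y ⟶ Y') (p : FA X Y × FB X Y),
        S.dimap f g p = (A.dimap f g p.1, B.dimap f g p.2)) ∧
      (∀ {X Y : C} (Z : C) (p : FA X Y × FB X Y),
        S.st Z p = (A.st Z p.1, B.st Z p.2)) ∧
      -- the unit pairs `pure` with the monoid unit
      (∀ {X Y : C} (f : X ⟶ Y), S.pure f = (A.pure f, Mo.e X Y)) ∧
      -- composition combines `comp`, the two actions and the multiplication
      (∀ {X Y Z : C} (p : FA X Y × FB X Y) (q : FA Y Z × FB Y Z),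
        S.comp p q = (A.comp p.1 q.1, Mo.m (Bi.actR p.2 q.1) (Bi.actL p.1 q.2))) := by
   refine ⟨{
    dimap := fun f g p => (A.dimap f g p.1, B.dimap f g p.2)
    dimap_id := by intro X Y a; simp [A.dimap_id, B.dimap_id]
    dimap_comp := by intros; simp [A.dimap_comp, B.dimap_comp]
    st := fun Z p => (A.st Z p.1, B.st Z p.2)
    st_natural := by intros; simp [A.st_natural, B.st_natural]
    st_dinatural := by intros; simp [A.st_dinatural, B.st_dinatural]
    st_assoc := by intros; simp [A.st_assoc, B.st_assoc]
    st_unit := by intros; simp [A.st_unit, B.st_unit]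
    pure := fun f => (A.pure f, Mo.e _ _)
    comp := fun p q => (A.comp p.1 q.1, Mo.m (Bi.actR p.2 q.1) (Bi.actL p.1 q.2))
    pure_natural := by intros; simp [A.pure_natural, Mo.e_dimap]
    comp_dimap := by
      intros; simp [A.comp_dimap, Mo.m_dimap, Bi.actR_dimap, Bi.actL_dimap]
    comp_middle := by
      intros; simp [A.comp_middle, Bi.actR_middle, Bi.actL_middle]
    comp_assoc := by
      intro W X Y Z a b c
      simp only [Prod.mk.injEq]
      refine ⟨A.comp_assoc _ _ _, ?_⟩
      rw [_hpres.actR_m, Bi.actL_comp, Mo.m_assoc, Bi.actLR, Bi.actR_comp,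
        _hpres.actL_m]
    pure_comp := by
      intro X Y a
      simp [A.pure_comp, _hpres.actR_e, Bi.actL_pure, B.dimap_id, Mo.m_unit_left]
    comp_pure := by
      intro X Y a
      simp [A.comp_pure, _hpres.actL_e, Bi.actR_pure, B.dimap_id, Mo.m_unit_right]
    pure_st := by intros; simp [A.pure_st, Mo.e_st]
    comp_st := by
      intros; simp [A.comp_st, Mo.m_st, Bi.actR_st, Bi.actL_st]
  }, ?_, ?_, ?_, ?_⟩ <;> intros <;> rfl
end

section
/- In the situation of the previous construction, if additionally A is a commutative arrow, B is a commutative (×,1)-monoid, and B is a commutative A-bimodule (the mixed strength/action square commutes), then the arrow A × B is commutative. -/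
open CategoryTheory MonoidalCategory

universe w v u

variable {C : Type u} [Category.{v} C] [MonoidalCategory C]

/-- in the situation of the `A × B` construction, if `A` is a
commutative arrow, `B` is a commutative `(×,1)`-monoid and a commutative
`A`-bimodule whose actions preserve the monoid structure, then the arrow
`A × B` is commutative. -/
theorem bimodule_product_arrow_commutative {C : Type u} [Category.{v} C]
    [MonoidalCategory C] [SymmetricCategory C]
    {FA FB : C → C → Type w} (A : CommArrowStruct C FA) (B : StrongProfStruct C FB)
    (Bi : CommBimoduleStruct A.toArrowStruct B) (Mo : MonoidProfStruct B)
    (hMoComm : ∀ {X Y : C} (b b' : FB X Y), Mo.m b b' = Mo.m b' b)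
    (_hpres : ActionsPreserveMonoid Bi.toBimoduleStruct Mo) :
    ∃ S : CommArrowStruct C (fun X Y => FA X Y × FB X Y),
      (∀ {X X' Y Y' : C} (f : X' ⟶ X) (g : Y ⟶ Y') (p : FA X Y × FB X Y),
        S.dimap f g p = (A.dimap f g p.1, B.dimap f g p.2)) ∧
      (∀ {X Y : C} (Z : C) (p : FA X Y × FB X Y),
        S.st Z p = (A.st Z p.1, B.st Z p.2)) ∧
      (∀ {X Y : C} (f : X ⟶ Y), S.pure f = (A.pure f, Mo.e X Y)) ∧
      (∀ {X Y Z : C} (p : FA X Y × FB X Y) (q : FA Y Z × FB Y Z),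
        S.comp p q =
          (A.comp p.1 q.1, Mo.m (Bi.actR p.2 q.1) (Bi.actL p.1 q.2))) := by
  -- key: the "other" mixed commutation, derived from `Bi.comm` via dimaps.
  have key : ∀ {X Y X' Y' : C} (a2 : FB X Y) (b1 : FA X' Y'),
      Bi.actR (B.st X' a2) (A.toStrongProfStruct.lst Y b1)
        = Bi.actL (A.toStrongProfStruct.lst X b1) (B.st Y' a2) := by
    intro X Y X' Y' a2 b1
    have E := congrArg (B.dimap (β_ X X').hom (β_ Y' Y).hom) (Bi.comm b1 a2)
    rw [Bi.actL_dimap, Bi.actR_dimap] at E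
    unfold StrongProfStruct.lst at E ⊢
    rw [← B.dimap_comp, ← B.dimap_comp, Category.id_comp, Category.comp_id,
        SymmetricCategory.symmetry, SymmetricCategory.symmetry] at E
    rw [← Bi.actL_middle, Bi.actR_middle, ← A.dimap_comp, ← A.dimap_comp,
        Category.id_comp, Category.id_comp, Category.comp_id, Category.comp_id] at E
    exact E.symm
  refine ⟨{
    dimap := fun f g p => (A.dimap f g p.1, B.dimap f g p.2)
    dimap_id := by intro X Y a; simp [A.dimap_id, B.dimap_id]
    dimap_comp := by intros; simp [A.dimap_comp, B.dimap_comp]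
    st := fun Z p => (A.st Z p.1, B.st Z p.2)
    st_natural := by intros; simp [A.st_natural, B.st_natural]
    st_dinatural := by intros; simp [A.st_dinatural, B.st_dinatural]
    st_assoc := by intros; simp [A.st_assoc, B.st_assoc]
    st_unit := by intros; simp [A.st_unit, B.st_unit]
    pure := fun f => (A.pure f, Mo.e _ _)
    comp := fun p q => (A.comp p.1 q.1, Mo.m (Bi.actR p.2 q.1) (Bi.actL p.1 q.2))
    pure_natural := by intros; simp [A.pure_natural, Mo.e_dimap]
    comp_dimap := by
      intros; simp [A.comp_dimap, Mo.m_dimap, Bi.actL_dimap, Bi.actR_dimap]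
    comp_middle := by
      intros; simp [A.comp_middle, Bi.actL_middle, Bi.actR_middle]
    comp_assoc := by
      intro W X Y Z p q r
      simp only [Prod.mk.injEq]
      refine ⟨A.comp_assoc _ _ _, ?_⟩
      rw [_hpres.actR_m, _hpres.actL_m, Bi.actR_comp, Bi.actL_comp, Bi.actLR,
        Mo.m_assoc]
    pure_comp := by
      intro X Y p
      simp [A.pure_comp, _hpres.actR_e, Bi.actL_pure, B.dimap_id, Mo.m_unit_left]
    comp_pure := by
      intro X Y p
      simp [A.comp_pure, _hpres.actL_e, Bi.actR_pure, B.dimap_id, Mo.m_unit_right]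
    pure_st := by intros; simp [A.pure_st, Mo.e_st]
    comp_st := by intros; simp [A.comp_st, Mo.m_st, Bi.actL_st, Bi.actR_st]
    comm := by
      intro X Y X' Y' p q
      simp only [StrongProfStruct.lst, Prod.mk.injEq]
      constructor
      · exact A.comm p.1 q.1
      · have h1 := Bi.comm p.1 q.2
        have h2 := key p.2 q.1
        unfold StrongProfStruct.lst at h1 h2
        rw [h1, h2, hMoComm]
    }, ?_, ?_, ?_, ?_⟩ <;> intros <;> rfl
end

section
/- Let A be a commutative arrow on a symmetric monoidal category C, B a context for A (commutative A-bimodule with costrength), and (M, ·, 1) a commutative monoid in Set. Then the profunctor (X,Y) ↦ M^{B(Y,X)} is a commutative A-bimodule and a commutative (×,1)-monoid in StrProf(C), with actions ℓ(a,h) = λb. h(r^B(b,a)) and r(h,a) = λb. h(ℓ^B(a,b)), monoid structure pointwise from M, and strength given by precomposition with the costrength of B. -/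
open CategoryTheory MonoidalCategory

universe w v u

variable {C : Type u} [Category.{v} C] [MonoidalCategory C]

/-- A bimodule over an arrow carried by a plain profunctor (no strength). -/
structure PBimoduleStruct {FA FB : C → C → Type w}
    (A : ArrowStruct C FA) (Bp : ProfStruct C FB) where
  actL : ∀ {X Y Z : C}, FA X Y → FB Y Z → FB X Z
  actR : ∀ {X Y Z : C}, FB X Y → FA Y Z → FB X Z
  actL_dimap : ∀ {X X' Y Z Z' : C} (f : X' ⟶ X) (g : Z ⟶ Z') (a : FA X Y) (b : FB Y Z),
    Bp.dimap f g (actL a b) = actL (A.dimap f (𝟙 Y) a) (Bp.dimap (𝟙 Y) g b)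
  actL_middle : ∀ {X Y Y' Z : C} (h : Y ⟶ Y') (a : FA X Y) (b : FB Y' Z),
    actL (A.dimap (𝟙 X) h a) b = actL a (Bp.dimap h (𝟙 Z) b)
  actL_pure : ∀ {X Y Z : C} (f : X ⟶ Y) (b : FB Y Z), actL (A.pure f) b = Bp.dimap f (𝟙 Z) b
  actL_comp : ∀ {W X Y Z : C} (a : FA W X) (a' : FA X Y) (b : FB Y Z),
    actL (A.comp a a') b = actL a (actL a' b)
  actR_dimap : ∀ {X X' Y Z Z' : C} (f : X' ⟶ X) (g : Z ⟶ Z') (b : FB X Y) (a : FA Y Z),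
    Bp.dimap f g (actR b a) = actR (Bp.dimap f (𝟙 Y) b) (A.dimap (𝟙 Y) g a)
  actR_middle : ∀ {X Y Y' Z : C} (h : Y ⟶ Y') (b : FB X Y) (a : FA Y' Z),
    actR (Bp.dimap (𝟙 X) h b) a = actR b (A.dimap h (𝟙 Z) a)
  actR_pure : ∀ {X Y Z : C} (b : FB X Y) (g : Y ⟶ Z), actR b (A.pure g) = Bp.dimap (𝟙 X) g b
  actR_comp : ∀ {W X Y Z : C} (b : FB W X) (a : FA X Y) (a' : FA Y Z),
    actR b (A.comp a a') = actR (actR b a) a'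
  actLR : ∀ {W X Y Z : C} (a : FA W X) (b : FB X Y) (a' : FA Y Z),
    actR (actL a b) a' = actL a (actR b a')

/-- A context for an arrow `A`: a commutative `A`-bimodule equipped with a
costrength compatible with the actions, associator and unitor. -/
structure ContextStruct [SymmetricCategory C] {FA FB : C → C → Type w}
    (A : ArrowStruct C FA) (Bp : ProfStruct C FB) extends PBimoduleStruct A Bp where
  cst : ∀ {X Y : C} (Z : C), FB (X ⊗ Z) (Y ⊗ Z) → FB X Y
  cst_natural : ∀ {X X' Y Y' : C} (Z : C) (f : X' ⟶ X) (g : Y ⟶ Y') (b : FB (X ⊗ Z) (Y ⊗ Z)),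
    cst Z (Bp.dimap (f ▷ Z) (g ▷ Z) b) = Bp.dimap f g (cst Z b)
  cst_dinatural : ∀ {X Y Z Z' : C} (h : Z ⟶ Z') (b : FB (X ⊗ Z') (Y ⊗ Z)),
    cst Z (Bp.dimap (X ◁ h) (𝟙 (Y ⊗ Z)) b) = cst Z' (Bp.dimap (𝟙 (X ⊗ Z')) (Y ◁ h) b)
  cst_assoc : ∀ {X Y : C} (Z Z' : C) (b : FB ((X ⊗ Z) ⊗ Z') ((Y ⊗ Z) ⊗ Z')),
    cst Z (cst Z' b) = cst (Z ⊗ Z') (Bp.dimap (α_ X Z Z').inv (α_ Y Z Z').hom b)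
  cst_unit : ∀ {X Y : C} (b : FB (X ⊗ 𝟙_ C) (Y ⊗ 𝟙_ C)),
    cst (𝟙_ C) b = Bp.dimap (ρ_ X).inv (ρ_ Y).hom b
  cst_actL : ∀ {X Y Z : C} (W : C) (a : FA X Y) (b : FB (Y ⊗ W) (Z ⊗ W)),
    cst W (actL (A.st W a) b) = actL a (cst W b)
  cst_actR : ∀ {X Y Z : C} (W : C) (b : FB (X ⊗ W) (Y ⊗ W)) (a : FA Y Z),
    cst W (actR b (A.st W a)) = actR (cst W b) a
  comm : ∀ {X Y X' Y' : C} (a : FA X Y) (b : FB (Y ⊗ X') (X ⊗ Y')),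
    cst X (Bp.dimap (β_ X' X).hom (β_ X Y').hom (actL (A.st X' a) b)) =
      cst Y (Bp.dimap (β_ X' Y).hom (β_ Y Y').hom (actR b (A.st Y' a)))

universe w'

/-- if `A` is a commutative arrow on a symmetric monoidal
category `C`, `B` is a context for `A`, and `M` is a commutative monoid, then
`(X,Y) ↦ M^{B(Y,X)}` is a commutative `A`-bimodule and commutative
`(×,1)`-monoid, with actions given by precomposing with the actions of `B`,
pointwise monoid structure, and strength given by precomposition with the
costrength of `B`. -/
theorem M_to_the_B_flip {C : Type u} [Category.{v} C] [MonoidalCategory C]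
    [SymmetricCategory C] {FA FB : C → C → Type w} (A : CommArrowStruct C FA)
    {Bp : ProfStruct C FB} (Ct : ContextStruct A.toArrowStruct Bp)
    (M : Type w) [CommMonoid M] :
    ∃ (Bs : StrongProfStruct C (fun X Y => FB Y X → M))
      (Bi : CommBimoduleStruct A.toArrowStruct Bs)
      (Mo : MonoidProfStruct Bs),
      -- the profunctor structure: `dimap f g h = h ∘ B.dimap g f`
      (∀ {X X' Y Y' : C} (f : X' ⟶ X) (g : Y ⟶ Y') (h : FB Y X → M),
        Bs.dimap f g h = fun b => h (Bp.dimap g f b)) ∧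
      -- strength is precomposition with the costrength of `B`
      (∀ {X Y : C} (Z : C) (h : FB Y X → M),
        Bs.st Z h = fun b => h (Ct.cst Z b)) ∧
      -- actions: `ℓ(a,h) = λ b. h (r^B b a)` and `r(h,a) = λ b. h (ℓ^B a b)`
      (∀ {X Y Z : C} (a : FA X Y) (h : FB Z Y → M),
        Bi.actL a h = fun b => h (Ct.actR b a)) ∧
      (∀ {X Y Z : C} (h : FB Y X → M) (a : FA Y Z),
        Bi.actR h a = fun b => h (Ct.actL a b)) ∧
      -- the monoid structure is pointwise from `M`
      (∀ (X Y : C), Mo.e X Y = fun _ => (1 : M)) ∧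
      (∀ {X Y : C} (h h' : FB Y X → M), Mo.m h h' = fun b => h b * h' b) ∧
      -- it is a commutative monoid preserved by the actions
      (∀ {X Y : C} (h h' : FB Y X → M), Mo.m h h' = Mo.m h' h) ∧
      ActionsPreserveMonoid Bi.toBimoduleStruct Mo := by
  classical
  -- auxiliary facts about splitting dimaps
  have split : ∀ {X X' Y Y' : C} (f : X' ⟶ X) (g : Y ⟶ Y') (b : FB X Y),
      Bp.dimap f g b = Bp.dimap (𝟙 _) g (Bp.dimap f (𝟙 _) b) := by
    intro X X' Y Y' f g b
    rw [← Bp.dimap_comp]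
    simp
  have split' : ∀ {X X' Y Y' : C} (f : X' ⟶ X) (g : Y ⟶ Y') (b : FB X Y),
      Bp.dimap f g b = Bp.dimap f (𝟙 _) (Bp.dimap (𝟙 _) g b) := by
    intro X X' Y Y' f g b
    rw [← Bp.dimap_comp]
    simp
  refine ⟨
    { dimap := fun f g h => fun b => h (Bp.dimap g f b)
      dimap_id := by intro X Y h; funext b; rw [Bp.dimap_id]
      dimap_comp := by
        intro X X' X'' Y Y' Y'' f f' g g' h
        funext b
        simp only []
        rw [Bp.dimap_comp g' g f' f]
      st := fun Z h => fun b => h (Ct.cst Z b)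
      st_natural := by
        intro X X' Y Y' Z f g h
        funext b
        simp only []
        rw [Ct.cst_natural Z g f b]
      st_dinatural := by
        intro X Y Z Z' h a
        funext b
        simp only []
        rw [Ct.cst_dinatural h b]
      st_assoc := by
        intro X Y Z Z' a
        funext b
        simp only []
        rw [Ct.cst_assoc Z Z' b]
      st_unit := by
        intro X Y a
        funext b
        rw [Ct.cst_unit b] }, ?_⟩
  refine ⟨
    { actL := fun a h => fun b => h (Ct.actR b a)
      actR := fun h a => fun b => h (Ct.actL a b)
      actL_dimap := by
        intro X X' Y Z Z' f g a h
        funext b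
        simp only []
        rw [split g f b, Ct.actR_middle, Ct.actR_dimap g (𝟙 _) b, A.dimap_id]
      actL_middle := by
        intro X Y Y' Z h a hb
        funext b
        simp only []
        rw [Ct.actR_dimap (𝟙 _) h b a, Bp.dimap_id]
      actL_pure := by
        intro X Y Z f hb
        funext b
        simp only []
        rw [Ct.actR_pure]
      actL_comp := by
        intro W X Y Z a a' hb
        funext b
        simp only []
        rw [Ct.actR_comp]
      actR_dimap := by
        intro X X' Y Z Z' f g h a
        funext b
        simp only []
        rw [Ct.actL_dimap (𝟙 _) f (A.toArrowStruct.dimap (𝟙 _) g a) b, A.dimap_id,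
          Ct.actL_middle, split' g f b]
      actR_middle := by
        intro X Y Y' Z h hb a
        funext b
        simp only []
        rw [Ct.actL_dimap h (𝟙 _) a b, Bp.dimap_id]
      actR_pure := by
        intro X Y Z hb g
        funext b
        simp only []
        rw [Ct.actL_pure]
      actR_comp := by
        intro W X Y Z hb a a'
        funext b
        simp only []
        rw [Ct.actL_comp]
      actLR := by
        intro W X Y Z a hb a'
        funext b
        simp only []
        rw [Ct.actLR]
      actL_st := by
        intro X Y Z W a hb
        funext b
        simp only []
        rw [Ct.cst_actR]
      actR_st := by
        intro X Y Z W hb a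
        funext b
        simp only []
        rw [Ct.cst_actL]
      comm := by
        intro X Y X' Y' a hb
        funext b
        simp only [StrongProfStruct.lst]
        exact congrArg hb (Ct.comm a b).symm }, ?_⟩
  refine ⟨
    { e := fun _ _ => fun _ => (1 : M)
      m := fun h h' => fun b => h b * h' b
      e_dimap := by intros; rfl
      m_dimap := by intros; rfl
      m_assoc := by intro X Y b b' b''; funext c; exact mul_assoc _ _ _
      m_unit_left := by intro X Y b; funext c; exact one_mul _
      m_unit_right := by intro X Y b; funext c; exact mul_one _
      e_st := by intros; rfl
      m_st := by intros; rfl }, ?_, ?_, ?_, ?_, ?_, ?_, ?_, ?_⟩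
  · intro X X' Y Y' f g h; rfl
  · intro X Y Z h; rfl
  · intro X Y Z a h; rfl
  · intro X Y Z h a; rfl
  · intro X Y; rfl
  · intro X Y h h'; rfl
  · intro X Y h h'; funext b; exact mul_comm _ _
  · exact ⟨fun _ _ _ => rfl, fun _ => rfl, fun _ _ _ => rfl, fun _ => rfl⟩
end

section
/- For every graded arrow A : P → StrProf(C) (a lax monoidal functor from a symmetric monoidal category P of grades to strong profunctors), the pointwise colimit Σ(A)(X,Y) = colim_{p ∈ P} A_p(X,Y) is an arrow on C; moreover, if A is commutative as a graded arrow, then Σ(A) is a commutative arrow. -/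
open CategoryTheory MonoidalCategory

universe w v u

variable {C : Type u} [Category.{v} C] [MonoidalCategory C]

universe v₂ u₂

/-- A `P`-graded arrow on `C`: a lax monoidal functor from the symmetric monoidal
category `P` of grades to strong profunctors on `C`, presented concretely. -/
structure GradedArrowStruct (P : Type u₂) [Category.{v₂} P] [MonoidalCategory P]
    (C : Type u) [Category.{v} C] [MonoidalCategory C]
    (F : P → C → C → Type w) where
  dimap : ∀ (p : P) {X X' Y Y' : C}, (X' ⟶ X) → (Y ⟶ Y') → F p X Y → F p X' Y'
  dimap_id : ∀ (p : P) {X Y : C} (a : F p X Y), dimap p (𝟙 X) (𝟙 Y) a = a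
  dimap_comp : ∀ (p : P) {X X' X'' Y Y' Y'' : C} (f : X' ⟶ X) (f' : X'' ⟶ X')
    (g : Y ⟶ Y') (g' : Y' ⟶ Y'') (a : F p X Y),
    dimap p (f' ≫ f) (g ≫ g') a = dimap p f' g' (dimap p f g a)
  st : ∀ (p : P) {X Y : C} (Z : C), F p X Y → F p (X ⊗ Z) (Y ⊗ Z)
  st_natural : ∀ (p : P) {X X' Y Y' : C} (Z : C) (f : X' ⟶ X) (g : Y ⟶ Y') (a : F p X Y),
    st p Z (dimap p f g a) = dimap p (f ▷ Z) (g ▷ Z) (st p Z a)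
  st_dinatural : ∀ (p : P) {X Y Z Z' : C} (h : Z ⟶ Z') (a : F p X Y),
    dimap p (X ◁ h) (𝟙 (Y ⊗ Z')) (st p Z' a) = dimap p (𝟙 (X ⊗ Z)) (Y ◁ h) (st p Z a)
  st_assoc : ∀ (p : P) {X Y : C} (Z Z' : C) (a : F p X Y),
    dimap p (α_ X Z Z').hom (α_ Y Z Z').inv (st p (Z ⊗ Z') a) = st p Z' (st p Z a)
  st_unit : ∀ (p : P) {X Y : C} (a : F p X Y),
    st p (𝟙_ C) a = dimap p (ρ_ X).hom (ρ_ Y).inv a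
  gmap : ∀ {p q : P}, (p ⟶ q) → ∀ {X Y : C}, F p X Y → F q X Y
  gmap_id : ∀ (p : P) {X Y : C} (a : F p X Y), gmap (𝟙 p) a = a
  gmap_comp : ∀ {p q r : P} (h : p ⟶ q) (k : q ⟶ r) {X Y : C} (a : F p X Y),
    gmap (h ≫ k) a = gmap k (gmap h a)
  gmap_dimap : ∀ {p q : P} (h : p ⟶ q) {X X' Y Y' : C} (f : X' ⟶ X) (g : Y ⟶ Y') (a : F p X Y),
    gmap h (dimap p f g a) = dimap q f g (gmap h a)
  gmap_st : ∀ {p q : P} (h : p ⟶ q) {X Y : C} (Z : C) (a : F p X Y),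
    gmap h (st p Z a) = st q Z (gmap h a)
  gpure : ∀ {X Y : C}, (X ⟶ Y) → F (𝟙_ P) X Y
  gcomp : ∀ {p q : P} {X Y Z : C}, F p X Y → F q Y Z → F (p ⊗ q) X Z
  gpure_natural : ∀ {X X' Y Y' : C} (f : X' ⟶ X) (g : Y ⟶ Y') (h : X ⟶ Y),
    dimap (𝟙_ P) f g (gpure h) = gpure (f ≫ h ≫ g)
  gpure_st : ∀ {X Y : C} (Z : C) (f : X ⟶ Y), st (𝟙_ P) Z (gpure f) = gpure (f ▷ Z)
  gcomp_dimap : ∀ {p q : P} {X X' Y Z Z' : C} (f : X' ⟶ X) (g : Z ⟶ Z')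
    (a : F p X Y) (b : F q Y Z),
    dimap (p ⊗ q) f g (gcomp a b) = gcomp (dimap p f (𝟙 Y) a) (dimap q (𝟙 Y) g b)
  gcomp_middle : ∀ {p q : P} {X Y Y' Z : C} (h : Y ⟶ Y') (a : F p X Y) (b : F q Y' Z),
    gcomp (dimap p (𝟙 X) h a) b = gcomp a (dimap q h (𝟙 Z) b)
  gcomp_st : ∀ {p q : P} {X Y Z : C} (W : C) (a : F p X Y) (b : F q Y Z),
    st (p ⊗ q) W (gcomp a b) = gcomp (st p W a) (st q W b)
  gcomp_gmapL : ∀ {p p' q : P} (h : p ⟶ p') {X Y Z : C} (a : F p X Y) (b : F q Y Z),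
    gcomp (gmap h a) b = gmap (h ▷ q) (gcomp a b)
  gcomp_gmapR : ∀ {p q q' : P} (k : q ⟶ q') {X Y Z : C} (a : F p X Y) (b : F q Y Z),
    gcomp a (gmap k b) = gmap (p ◁ k) (gcomp a b)
  gcomp_assoc : ∀ {p q r : P} {W X Y Z : C} (a : F p W X) (b : F q X Y) (c : F r Y Z),
    gmap (α_ p q r).hom (gcomp (gcomp a b) c) = gcomp a (gcomp b c)
  gpure_gcomp : ∀ {p : P} {X Y : C} (a : F p X Y),
    gmap (λ_ p).hom (gcomp (gpure (𝟙 X)) a) = a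
  gcomp_gpure : ∀ {p : P} {X Y : C} (a : F p X Y),
    gmap (ρ_ p).hom (gcomp a (gpure (𝟙 Y))) = a

/-- The left strength of a graded arrow, via the symmetry of `C`. -/
def GradedArrowStruct.glst {P : Type u₂} [Category.{v₂} P] [MonoidalCategory P]
    {C : Type u} [Category.{v} C] [MonoidalCategory C] [SymmetricCategory C]
    {F : P → C → C → Type w} (G : GradedArrowStruct P C F)
    (p : P) {X Y : C} (Z : C) (a : F p X Y) : F p (Z ⊗ X) (Z ⊗ Y) :=
  G.dimap p (β_ Z X).hom (β_ Y Z).hom (G.st p Z a)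

/-- Commutativity of a graded arrow: the two parallel compositions agree (up to
the symmetry of the grading category). -/
def GradedArrowStruct.Commutative {P : Type u₂} [Category.{v₂} P] [MonoidalCategory P]
    [SymmetricCategory P]
    {C : Type u} [Category.{v} C] [MonoidalCategory C] [SymmetricCategory C]
    {F : P → C → C → Type w} (G : GradedArrowStruct P C F) : Prop :=
  ∀ {p q : P} {X Y X' Y' : C} (a : F p X Y) (b : F q X' Y'),
    G.gcomp (G.st p X' a) (G.glst q Y b) =
      G.gmap (β_ q p).hom (G.gcomp (G.glst q X b) (G.st p Y' a))

/-- The carrier of the pointwise colimit of a graded arrow over its grades. -/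
def HideCarrier {P : Type u₂} [Category.{v₂} P] [MonoidalCategory P]
    {C : Type u} [Category.{v} C] [MonoidalCategory C]
    {F : P → C → C → Type w} (G : GradedArrowStruct P C F) (X Y : C) :
    Type (max u₂ w) :=
  Quot (fun (a b : Σ p : P, F p X Y) => ∃ h : a.1 ⟶ b.1, G.gmap h a.2 = b.2)

section HideAux

variable {P : Type u₂} [Category.{v₂} P] [MonoidalCategory P]
  {C : Type u} [Category.{v} C] [MonoidalCategory C]
  {F : P → C → C → Type w} (G : GradedArrowStruct P C F)

/-- dimap on the pointwise colimit. -/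
def hideDimap {X X' Y Y' : C} (f : X' ⟶ X) (g : Y ⟶ Y') :
    HideCarrier G X Y → HideCarrier G X' Y' :=
  Quot.lift (fun a => Quot.mk _ ⟨a.1, G.dimap a.1 f g a.2⟩)
    (by rintro ⟨p, a⟩ ⟨q, b⟩ ⟨h, hb⟩
        dsimp only at h hb; subst hb
        exact Quot.sound ⟨h, G.gmap_dimap h f g a⟩)

/-- strength on the pointwise colimit. -/
def hideSt {X Y : C} (Z : C) : HideCarrier G X Y → HideCarrier G (X ⊗ Z) (Y ⊗ Z) :=
  Quot.lift (fun a => Quot.mk _ ⟨a.1, G.st a.1 Z a.2⟩)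
    (by rintro ⟨p, a⟩ ⟨q, b⟩ ⟨h, hb⟩
        dsimp only at h hb; subst hb
        exact Quot.sound ⟨h, G.gmap_st h Z a⟩)

/-- composition on the pointwise colimit. -/
def hideComp {X Y Z : C} : HideCarrier G X Y → HideCarrier G Y Z → HideCarrier G X Z :=
  Quot.lift
    (fun a => Quot.lift (fun b => Quot.mk _ ⟨a.1 ⊗ b.1, G.gcomp a.2 b.2⟩)
      (by rintro ⟨q, b⟩ ⟨q', b'⟩ ⟨k, hb⟩
          dsimp only at k hb; subst hb
          exact Quot.sound ⟨a.1 ◁ k, (G.gcomp_gmapR k a.2 b).symm⟩))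
    (by rintro ⟨p, a⟩ ⟨p', a'⟩ ⟨h, ha⟩
        dsimp only at h ha; subst ha
        funext b
        induction b using Quot.ind with
        | _ b => exact Quot.sound ⟨h ▷ b.1, (G.gcomp_gmapL h a b.2).symm⟩)

/-- The arrow structure on the pointwise colimit. -/
def hideArrow : ArrowStruct C (HideCarrier G) where
  dimap := hideDimap G
  dimap_id := by
    rintro X Y ⟨⟨p, a⟩⟩
    exact congrArg _ (congrArg _ (G.dimap_id p a))
  dimap_comp := by
    rintro X X' X'' Y Y' Y'' f f' g g' ⟨⟨p, a⟩⟩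
    exact congrArg _ (congrArg _ (G.dimap_comp p f f' g g' a))
  st := hideSt G
  st_natural := by
    rintro X X' Y Y' Z f g ⟨⟨p, a⟩⟩
    exact congrArg _ (congrArg _ (G.st_natural p Z f g a))
  st_dinatural := by
    rintro X Y Z Z' h ⟨⟨p, a⟩⟩
    exact congrArg _ (congrArg _ (G.st_dinatural p h a))
  st_assoc := by
    rintro X Y Z Z' ⟨⟨p, a⟩⟩
    exact congrArg _ (congrArg _ (G.st_assoc p Z Z' a))
  st_unit := by
    rintro X Y ⟨⟨p, a⟩⟩
    exact congrArg _ (congrArg _ (G.st_unit p a))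
  pure f := Quot.mk _ ⟨𝟙_ P, G.gpure f⟩
  comp := hideComp G
  pure_natural := by
    intro X X' Y Y' f g h
    exact congrArg _ (congrArg _ (G.gpure_natural f g h))
  comp_dimap := by
    rintro X X' Y Z Z' f g ⟨⟨p, a⟩⟩ ⟨⟨q, b⟩⟩
    exact congrArg _ (congrArg _ (G.gcomp_dimap f g a b))
  comp_middle := by
    rintro X Y Y' Z h ⟨⟨p, a⟩⟩ ⟨⟨q, b⟩⟩
    exact congrArg _ (congrArg _ (G.gcomp_middle h a b))
  comp_assoc := by
    rintro W X Y Z ⟨⟨p, a⟩⟩ ⟨⟨q, b⟩⟩ ⟨⟨r, c⟩⟩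
    exact Quot.sound ⟨(α_ p q r).hom, G.gcomp_assoc a b c⟩
  pure_comp := by
    rintro X Y ⟨⟨p, a⟩⟩
    exact Quot.sound ⟨(λ_ p).hom, G.gpure_gcomp a⟩
  comp_pure := by
    rintro X Y ⟨⟨p, a⟩⟩
    exact Quot.sound ⟨(ρ_ p).hom, G.gcomp_gpure a⟩
  pure_st := by
    intro X Y Z f
    exact congrArg _ (congrArg _ (G.gpure_st Z f))
  comp_st := by
    rintro X Y Z W ⟨⟨p, a⟩⟩ ⟨⟨q, b⟩⟩
    exact congrArg _ (congrArg _ (G.gcomp_st W a b))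

end HideAux

/-- for every graded arrow `A : P → StrProf(C)`, the pointwise
colimit `Σ(A)(X,Y) = colim_p A_p(X,Y)` is an arrow on `C`; moreover, if `A` is
commutative as a graded arrow, then `Σ(A)` is a commutative arrow. -/
theorem hide_graded_arrow {P : Type u₂} [Category.{v₂} P] [MonoidalCategory P]
    [SymmetricCategory P] {C : Type u} [Category.{v} C] [MonoidalCategory C]
    [SymmetricCategory C] {F : P → C → C → Type w}
    (G : GradedArrowStruct P C F) :
    (∃ S : ArrowStruct C (HideCarrier G),
      (∀ {X X' Y Y' : C} (f : X' ⟶ X) (g : Y ⟶ Y') (p : P) (a : F p X Y),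
        S.dimap f g (Quot.mk _ ⟨p, a⟩) = Quot.mk _ ⟨p, G.dimap p f g a⟩) ∧
      (∀ {X Y : C} (f : X ⟶ Y), S.pure f = Quot.mk _ ⟨𝟙_ P, G.gpure f⟩) ∧
      (∀ {X Y Z : C} (p q : P) (a : F p X Y) (b : F q Y Z),
        S.comp (Quot.mk _ ⟨p, a⟩) (Quot.mk _ ⟨q, b⟩) =
          Quot.mk _ ⟨p ⊗ q, G.gcomp a b⟩) ∧
      (∀ {X Y : C} (Z : C) (p : P) (a : F p X Y),
        S.st Z (Quot.mk _ ⟨p, a⟩) = Quot.mk _ ⟨p, G.st p Z a⟩)) ∧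
    (G.Commutative →
      ∃ S : CommArrowStruct C (HideCarrier G),
        (∀ {X X' Y Y' : C} (f : X' ⟶ X) (g : Y ⟶ Y') (p : P) (a : F p X Y),
          S.dimap f g (Quot.mk _ ⟨p, a⟩) = Quot.mk _ ⟨p, G.dimap p f g a⟩) ∧
        (∀ {X Y : C} (f : X ⟶ Y), S.pure f = Quot.mk _ ⟨𝟙_ P, G.gpure f⟩) ∧
        (∀ {X Y Z : C} (p q : P) (a : F p X Y) (b : F q Y Z),
          S.comp (Quot.mk _ ⟨p, a⟩) (Quot.mk _ ⟨q, b⟩) =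
            Quot.mk _ ⟨p ⊗ q, G.gcomp a b⟩) ∧
        (∀ {X Y : C} (Z : C) (p : P) (a : F p X Y),
          S.st Z (Quot.mk _ ⟨p, a⟩) = Quot.mk _ ⟨p, G.st p Z a⟩)) := by
  constructor
  · exact ⟨hideArrow G, fun f g p a => rfl, fun f => rfl, fun p q a b => rfl,
      fun Z p a => rfl⟩
  · intro hComm
    refine ⟨{ hideArrow G with comm := ?_ }, fun f g p a => rfl, fun f => rfl,
      fun p q a b => rfl, fun Z p a => rfl⟩
    rintro X Y X' Y' ⟨⟨p, a⟩⟩ ⟨⟨q, b⟩⟩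
    exact (Quot.sound ⟨(β_ q p).hom, (hComm a b).symm⟩).symm
end

section
/- Assume A : P → StrProf(C) is a commutative graded arrow and B : P → StrProf(C) is a commutative graded A-bimodule such that each B_p is a commutative (×,1)-monoid preserved by the actions. Then the pointwise product A × B : P → StrProf(C), (A×B)_p(X,Y) = A_p(X,Y) × B_p(X,Y), is a commutative graded arrow. -/
open CategoryTheory MonoidalCategory

universe w v u

variable {C : Type u} [Category.{v} C] [MonoidalCategory C]

universe v₂ u₂

/-- A graded bimodule over a graded arrow `G`: a family of strong profunctors
with graded left and right actions, natural in the grades. -/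
structure GradedBimoduleStruct {P : Type u₂} [Category.{v₂} P] [MonoidalCategory P]
    {C : Type u} [Category.{v} C] [MonoidalCategory C]
    {FA : P → C → C → Type w} (G : GradedArrowStruct P C FA)
    (FB : P → C → C → Type w) where
  dimap : ∀ (p : P) {X X' Y Y' : C}, (X' ⟶ X) → (Y ⟶ Y') → FB p X Y → FB p X' Y'
  dimap_id : ∀ (p : P) {X Y : C} (b : FB p X Y), dimap p (𝟙 X) (𝟙 Y) b = b
  dimap_comp : ∀ (p : P) {X X' X'' Y Y' Y'' : C} (f : X' ⟶ X) (f' : X'' ⟶ X')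
    (g : Y ⟶ Y') (g' : Y' ⟶ Y'') (b : FB p X Y),
    dimap p (f' ≫ f) (g ≫ g') b = dimap p f' g' (dimap p f g b)
  st : ∀ (p : P) {X Y : C} (Z : C), FB p X Y → FB p (X ⊗ Z) (Y ⊗ Z)
  st_natural : ∀ (p : P) {X X' Y Y' : C} (Z : C) (f : X' ⟶ X) (g : Y ⟶ Y') (b : FB p X Y),
    st p Z (dimap p f g b) = dimap p (f ▷ Z) (g ▷ Z) (st p Z b)
  st_dinatural : ∀ (p : P) {X Y Z Z' : C} (h : Z ⟶ Z') (b : FB p X Y),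
    dimap p (X ◁ h) (𝟙 (Y ⊗ Z')) (st p Z' b) = dimap p (𝟙 (X ⊗ Z)) (Y ◁ h) (st p Z b)
  st_assoc : ∀ (p : P) {X Y : C} (Z Z' : C) (b : FB p X Y),
    dimap p (α_ X Z Z').hom (α_ Y Z Z').inv (st p (Z ⊗ Z') b) = st p Z' (st p Z b)
  st_unit : ∀ (p : P) {X Y : C} (b : FB p X Y),
    st p (𝟙_ C) b = dimap p (ρ_ X).hom (ρ_ Y).inv b
  bmap : ∀ {p q : P}, (p ⟶ q) → ∀ {X Y : C}, FB p X Y → FB q X Y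
  bmap_id : ∀ (p : P) {X Y : C} (b : FB p X Y), bmap (𝟙 p) b = b
  bmap_comp : ∀ {p q r : P} (h : p ⟶ q) (k : q ⟶ r) {X Y : C} (b : FB p X Y),
    bmap (h ≫ k) b = bmap k (bmap h b)
  bmap_dimap : ∀ {p q : P} (h : p ⟶ q) {X X' Y Y' : C} (f : X' ⟶ X) (g : Y ⟶ Y') (b : FB p X Y),
    bmap h (dimap p f g b) = dimap q f g (bmap h b)
  bmap_st : ∀ {p q : P} (h : p ⟶ q) {X Y : C} (Z : C) (b : FB p X Y),
    bmap h (st p Z b) = st q Z (bmap h b)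
  actL : ∀ {p q : P} {X Y Z : C}, FA p X Y → FB q Y Z → FB (p ⊗ q) X Z
  actR : ∀ {p q : P} {X Y Z : C}, FB p X Y → FA q Y Z → FB (p ⊗ q) X Z
  actL_dimap : ∀ {p q : P} {X X' Y Z Z' : C} (f : X' ⟶ X) (g : Z ⟶ Z')
    (a : FA p X Y) (b : FB q Y Z),
    dimap (p ⊗ q) f g (actL a b) = actL (G.dimap p f (𝟙 Y) a) (dimap q (𝟙 Y) g b)
  actL_middle : ∀ {p q : P} {X Y Y' Z : C} (h : Y ⟶ Y') (a : FA p X Y) (b : FB q Y' Z),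
    actL (G.dimap p (𝟙 X) h a) b = actL a (dimap q h (𝟙 Z) b)
  actL_gmap : ∀ {p p' q : P} (h : p ⟶ p') {X Y Z : C} (a : FA p X Y) (b : FB q Y Z),
    actL (G.gmap h a) b = bmap (h ▷ q) (actL a b)
  actL_bmap : ∀ {p q q' : P} (k : q ⟶ q') {X Y Z : C} (a : FA p X Y) (b : FB q Y Z),
    actL a (bmap k b) = bmap (p ◁ k) (actL a b)
  actL_pure : ∀ {q : P} {X Y Z : C} (f : X ⟶ Y) (b : FB q Y Z),
    actL (G.gpure f) b = bmap (λ_ q).inv (dimap q f (𝟙 Z) b)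
  actL_comp : ∀ {p p' q : P} {W X Y Z : C} (a : FA p W X) (a' : FA p' X Y) (b : FB q Y Z),
    bmap (α_ p p' q).hom (actL (G.gcomp a a') b) = actL a (actL a' b)
  actR_dimap : ∀ {p q : P} {X X' Y Z Z' : C} (f : X' ⟶ X) (g : Z ⟶ Z')
    (b : FB p X Y) (a : FA q Y Z),
    dimap (p ⊗ q) f g (actR b a) = actR (dimap p f (𝟙 Y) b) (G.dimap q (𝟙 Y) g a)
  actR_middle : ∀ {p q : P} {X Y Y' Z : C} (h : Y ⟶ Y') (b : FB p X Y) (a : FA q Y' Z),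
    actR (dimap p (𝟙 X) h b) a = actR b (G.dimap q h (𝟙 Z) a)
  actR_bmap : ∀ {p p' q : P} (h : p ⟶ p') {X Y Z : C} (b : FB p X Y) (a : FA q Y Z),
    actR (bmap h b) a = bmap (h ▷ q) (actR b a)
  actR_gmap : ∀ {p q q' : P} (k : q ⟶ q') {X Y Z : C} (b : FB p X Y) (a : FA q Y Z),
    actR b (G.gmap k a) = bmap (p ◁ k) (actR b a)
  actR_pure : ∀ {p : P} {X Y Z : C} (b : FB p X Y) (g : Y ⟶ Z),
    actR b (G.gpure g) = bmap (ρ_ p).inv (dimap p (𝟙 X) g b)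
  actR_comp : ∀ {p q q' : P} {W X Y Z : C} (b : FB p W X) (a : FA q X Y) (a' : FA q' Y Z),
    bmap (α_ p q q').inv (actR b (G.gcomp a a')) = actR (actR b a) a'
  actLR : ∀ {p q r : P} {W X Y Z : C} (a : FA p W X) (b : FB q X Y) (a' : FA r Y Z),
    bmap (α_ p q r).hom (actR (actL a b) a') = actL a (actR b a')
  actL_st : ∀ {p q : P} {X Y Z : C} (W : C) (a : FA p X Y) (b : FB q Y Z),
    st (p ⊗ q) W (actL a b) = actL (G.st p W a) (st q W b)
  actR_st : ∀ {p q : P} {X Y Z : C} (W : C) (b : FB p X Y) (a : FA q Y Z),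
    st (p ⊗ q) W (actR b a) = actR (st p W b) (G.st q W a)

/-- The left strength of a graded bimodule, via the symmetry of `C`. -/
def GradedBimoduleStruct.blst {P : Type u₂} [Category.{v₂} P] [MonoidalCategory P]
    {C : Type u} [Category.{v} C] [MonoidalCategory C] [SymmetricCategory C]
    {FA : P → C → C → Type w} {G : GradedArrowStruct P C FA} {FB : P → C → C → Type w}
    (B : GradedBimoduleStruct G FB)
    (p : P) {X Y : C} (Z : C) (b : FB p X Y) : FB p (Z ⊗ X) (Z ⊗ Y) :=
  B.dimap p (β_ Z X).hom (β_ Y Z).hom (B.st p Z b)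

/-- Commutativity of a graded bimodule. -/
def GradedBimoduleStruct.Commutative {P : Type u₂} [Category.{v₂} P] [MonoidalCategory P]
    [SymmetricCategory P]
    {C : Type u} [Category.{v} C] [MonoidalCategory C] [SymmetricCategory C]
    {FA : P → C → C → Type w} {G : GradedArrowStruct P C FA} {FB : P → C → C → Type w}
    (B : GradedBimoduleStruct G FB) : Prop :=
  ∀ {p q : P} {X Y X' Y' : C} (a : FA p X Y) (b : FB q X' Y'),
    B.actL (G.st p X' a) (B.blst q Y b) =
      B.bmap (β_ q p).hom (B.actR (B.blst q X b) (G.st p Y' a))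

/-- A pointwise `(×,1)`-monoid structure on a graded bimodule. -/
structure GradedMonoidProfStruct {P : Type u₂} [Category.{v₂} P] [MonoidalCategory P]
    {C : Type u} [Category.{v} C] [MonoidalCategory C]
    {FA : P → C → C → Type w} {G : GradedArrowStruct P C FA} {FB : P → C → C → Type w}
    (B : GradedBimoduleStruct G FB) where
  e : ∀ (p : P) (X Y : C), FB p X Y
  m : ∀ {p : P} {X Y : C}, FB p X Y → FB p X Y → FB p X Y
  e_dimap : ∀ (p : P) {X X' Y Y' : C} (f : X' ⟶ X) (g : Y ⟶ Y'),
    B.dimap p f g (e p X Y) = e p X' Y'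
  m_dimap : ∀ (p : P) {X X' Y Y' : C} (f : X' ⟶ X) (g : Y ⟶ Y') (b b' : FB p X Y),
    B.dimap p f g (m b b') = m (B.dimap p f g b) (B.dimap p f g b')
  e_bmap : ∀ {p q : P} (h : p ⟶ q) (X Y : C), B.bmap h (e p X Y) = e q X Y
  m_bmap : ∀ {p q : P} (h : p ⟶ q) {X Y : C} (b b' : FB p X Y),
    B.bmap h (m b b') = m (B.bmap h b) (B.bmap h b')
  m_assoc : ∀ {p : P} {X Y : C} (b b' b'' : FB p X Y), m (m b b') b'' = m b (m b' b'')
  m_unit_left : ∀ {p : P} {X Y : C} (b : FB p X Y), m (e p X Y) b = b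
  m_unit_right : ∀ {p : P} {X Y : C} (b : FB p X Y), m b (e p X Y) = b
  e_st : ∀ (p : P) (X Y Z : C), B.st p Z (e p X Y) = e p (X ⊗ Z) (Y ⊗ Z)
  m_st : ∀ (p : P) {X Y : C} (Z : C) (b b' : FB p X Y),
    B.st p Z (m b b') = m (B.st p Z b) (B.st p Z b')

/-- The graded actions preserve the pointwise monoid structure. -/
structure GradedActionsPreserveMonoid {P : Type u₂} [Category.{v₂} P] [MonoidalCategory P]
    {C : Type u} [Category.{v} C] [MonoidalCategory C]
    {FA : P → C → C → Type w} {G : GradedArrowStruct P C FA} {FB : P → C → C → Type w}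
    {B : GradedBimoduleStruct G FB} (Mo : GradedMonoidProfStruct B) : Prop where
  actL_m : ∀ {p q : P} {X Y Z : C} (a : FA p X Y) (b b' : FB q Y Z),
    B.actL a (Mo.m b b') = Mo.m (B.actL a b) (B.actL a b')
  actL_e : ∀ {p q : P} {X Y Z : C} (a : FA p X Y),
    B.actL a (Mo.e q Y Z) = Mo.e (p ⊗ q) X Z
  actR_m : ∀ {p q : P} {X Y Z : C} (b b' : FB p X Y) (a : FA q Y Z),
    B.actR (Mo.m b b') a = Mo.m (B.actR b a) (B.actR b' a)
  actR_e : ∀ {p q : P} {X Y Z : C} (a : FA q Y Z),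
    B.actR (Mo.e p X Y) a = Mo.e (p ⊗ q) X Z


section Helpers

variable {P : Type u₂} [Category.{v₂} P] [MonoidalCategory P]
variable {FA FB : P → C → C → Type w}

lemma shuffle_actR (G : GradedArrowStruct P C FA) (B : GradedBimoduleStruct G FB)
    {p q : P} {X₁ X₂ M₁ M₂ N₁ Y₁ Y₂ : C}
    (f : X₂ ⟶ X₁) (g : M₁ ⟶ M₂) (h : M₂ ⟶ N₁) (k : Y₁ ⟶ Y₂)
    (b : FB p X₁ M₁) (a : FA q N₁ Y₁) :
    B.actR (B.dimap p f g b) (G.dimap q h k a)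
      = B.dimap (p ⊗ q) f k (B.actR b (G.dimap q (g ≫ h) (𝟙 _) a)) := by
  rw [show B.dimap p f g b = B.dimap p f (𝟙 _) (B.dimap p (𝟙 _) g b) by
        rw [← B.dimap_comp]; simp,
      show G.dimap q h k a = G.dimap q (𝟙 _) k (G.dimap q h (𝟙 _) a) by
        rw [← G.dimap_comp]; simp,
      ← B.actR_dimap, B.actR_middle, ← G.dimap_comp]
  simp

lemma shuffle_actL (G : GradedArrowStruct P C FA) (B : GradedBimoduleStruct G FB)
    {p q : P} {X₁ X₂ M₁ M₂ N₁ Y₁ Y₂ : C}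
    (f : X₂ ⟶ X₁) (g : M₁ ⟶ M₂) (h : M₂ ⟶ N₁) (k : Y₁ ⟶ Y₂)
    (a : FA p X₁ M₁) (b : FB q N₁ Y₁) :
    B.actL (G.dimap p f g a) (B.dimap q h k b)
      = B.dimap (p ⊗ q) f k (B.actL a (B.dimap q (g ≫ h) (𝟙 _) b)) := by
  rw [show G.dimap p f g a = G.dimap p f (𝟙 _) (G.dimap p (𝟙 _) g a) by
        rw [← G.dimap_comp]; simp,
      show B.dimap q h k b = B.dimap q (𝟙 _) k (B.dimap q h (𝟙 _) b) by
        rw [← B.dimap_comp]; simp,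
      ← B.actL_dimap, B.actL_middle, ← B.dimap_comp]
  simp

variable [SymmetricCategory C]

lemma stB_eq_blst (G : GradedArrowStruct P C FA) (B : GradedBimoduleStruct G FB)
    (p : P) {X Y : C} (Z : C) (b : FB p X Y) :
    B.st p Z b = B.dimap p (β_ X Z).hom (β_ Z Y).hom (B.blst p Z b) := by
  unfold GradedBimoduleStruct.blst
  rw [← B.dimap_comp, SymmetricCategory.symmetry, SymmetricCategory.symmetry, B.dimap_id]

lemma dual_comm [SymmetricCategory P]
    (G : GradedArrowStruct P C FA) (B : GradedBimoduleStruct G FB)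
    (hB : B.Commutative) {p q : P} {X Y X' Y' : C}
    (b : FB p X Y) (a : FA q X' Y') :
    B.actR (B.st p X' b) (G.glst q Y a)
      = B.bmap (β_ q p).hom (B.actL (G.glst q X a) (B.st p Y' b)) := by
  rw [stB_eq_blst, stB_eq_blst]
  unfold GradedArrowStruct.glst
  rw [shuffle_actR, shuffle_actL, SymmetricCategory.symmetry, SymmetricCategory.symmetry,
      G.dimap_id, B.dimap_id, hB, B.bmap_dimap, ← B.bmap_comp,
      SymmetricCategory.symmetry, B.bmap_id]

end Helpers

/-- if `A` is a commutative graded arrow and `B` a commutative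
graded `A`-bimodule such that each `B_p` is a commutative `(×,1)`-monoid
preserved by the actions, then the pointwise product `A × B` is a commutative
graded arrow. -/
theorem graded_bimodule_product_arrow {P : Type u₂} [Category.{v₂} P]
    [MonoidalCategory P] [SymmetricCategory P]
    {C : Type u} [Category.{v} C] [MonoidalCategory C] [SymmetricCategory C]
    {FA FB : P → C → C → Type w} (G : GradedArrowStruct P C FA)
    (hG : G.Commutative) (B : GradedBimoduleStruct G FB) (hB : B.Commutative)
    (Mo : GradedMonoidProfStruct B)
    (hMoComm : ∀ {p : P} {X Y : C} (b b' : FB p X Y), Mo.m b b' = Mo.m b' b)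
    (_hpres : GradedActionsPreserveMonoid Mo) :
    ∃ S : GradedArrowStruct P C (fun p X Y => FA p X Y × FB p X Y),
      S.Commutative ∧
      (∀ (p : P) {X X' Y Y' : C} (f : X' ⟶ X) (g : Y ⟶ Y')
          (c : FA p X Y × FB p X Y),
        S.dimap p f g c = (G.dimap p f g c.1, B.dimap p f g c.2)) ∧
      (∀ (p : P) {X Y : C} (Z : C) (c : FA p X Y × FB p X Y),
        S.st p Z c = (G.st p Z c.1, B.st p Z c.2)) ∧
      (∀ {p q : P} (h : p ⟶ q) {X Y : C} (c : FA p X Y × FB p X Y),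
        S.gmap h c = (G.gmap h c.1, B.bmap h c.2)) ∧
      (∀ {X Y : C} (f : X ⟶ Y), S.gpure f = (G.gpure f, Mo.e (𝟙_ P) X Y)) ∧
      (∀ {p q : P} {X Y Z : C} (c : FA p X Y × FB p X Y) (d : FA q Y Z × FB q Y Z),
        S.gcomp c d = (G.gcomp c.1 d.1, Mo.m (B.actR c.2 d.1) (B.actL c.1 d.2))) := by
  refine ⟨{
    dimap := fun p {X X' Y Y'} f g c => (G.dimap p f g c.1, B.dimap p f g c.2)
    dimap_id := by
      intro p X Y a; exact Prod.ext (G.dimap_id p a.1) (B.dimap_id p a.2)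
    dimap_comp := by
      intro p X X' X'' Y Y' Y'' f f' g g' a
      exact Prod.ext (G.dimap_comp p f f' g g' a.1) (B.dimap_comp p f f' g g' a.2)
    st := fun p {X Y} Z c => (G.st p Z c.1, B.st p Z c.2)
    st_natural := by
      intro p X X' Y Y' Z f g a
      exact Prod.ext (G.st_natural p Z f g a.1) (B.st_natural p Z f g a.2)
    st_dinatural := by
      intro p X Y Z Z' h a
      exact Prod.ext (G.st_dinatural p h a.1) (B.st_dinatural p h a.2)
    st_assoc := by
      intro p X Y Z Z' a
      exact Prod.ext (G.st_assoc p Z Z' a.1) (B.st_assoc p Z Z' a.2)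
    st_unit := by
      intro p X Y a; exact Prod.ext (G.st_unit p a.1) (B.st_unit p a.2)
    gmap := fun {p q} h {X Y} c => (G.gmap h c.1, B.bmap h c.2)
    gmap_id := by
      intro p X Y a; exact Prod.ext (G.gmap_id p a.1) (B.bmap_id p a.2)
    gmap_comp := by
      intro p q r h k X Y a
      exact Prod.ext (G.gmap_comp h k a.1) (B.bmap_comp h k a.2)
    gmap_dimap := by
      intro p q h X X' Y Y' f g a
      exact Prod.ext (G.gmap_dimap h f g a.1) (B.bmap_dimap h f g a.2)
    gmap_st := by
      intro p q h X Y Z a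
      exact Prod.ext (G.gmap_st h Z a.1) (B.bmap_st h Z a.2)
    gpure := fun {X Y} f => (G.gpure f, Mo.e (𝟙_ P) _ _)
    gcomp := fun {p q} {X Y Z} c d => (G.gcomp c.1 d.1, Mo.m (B.actR c.2 d.1) (B.actL c.1 d.2))
    gpure_natural := by
      intro X X' Y Y' f g h
      exact Prod.ext (G.gpure_natural f g h) (Mo.e_dimap (𝟙_ P) f g)
    gpure_st := by
      intro X Y Z f
      exact Prod.ext (G.gpure_st Z f) (Mo.e_st (𝟙_ P) _ _ _)
    gcomp_dimap := by
      intro p q X X' Y Z Z' f g a b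
      refine Prod.ext (G.gcomp_dimap f g a.1 b.1) ?_
      show B.dimap _ f g (Mo.m _ _) = _
      rw [Mo.m_dimap, B.actR_dimap, B.actL_dimap]
    gcomp_middle := by
      intro p q X Y Y' Z h a b
      refine Prod.ext (G.gcomp_middle h a.1 b.1) ?_
      show Mo.m (B.actR (B.dimap _ _ h a.2) b.1) (B.actL (G.dimap _ _ h a.1) b.2) = _
      rw [B.actR_middle, B.actL_middle]
    gcomp_st := by
      intro p q X Y Z W a b
      refine Prod.ext (G.gcomp_st W a.1 b.1) ?_
      show B.st _ W (Mo.m _ _) = _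
      rw [Mo.m_st, B.actR_st, B.actL_st]
    gcomp_gmapL := by
      intro p p' q h X Y Z a b
      refine Prod.ext (G.gcomp_gmapL h a.1 b.1) ?_
      show Mo.m (B.actR (B.bmap h a.2) b.1) (B.actL (G.gmap h a.1) b.2) = _
      rw [B.actR_bmap, B.actL_gmap, ← Mo.m_bmap]
    gcomp_gmapR := by
      intro p q q' k X Y Z a b
      refine Prod.ext (G.gcomp_gmapR k a.1 b.1) ?_
      show Mo.m (B.actR a.2 (G.gmap k b.1)) (B.actL a.1 (B.bmap k b.2)) = _
      rw [B.actR_gmap, B.actL_bmap, ← Mo.m_bmap]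
    gcomp_assoc := by
      intro p q r W X Y Z a b c
      refine Prod.ext (G.gcomp_assoc a.1 b.1 c.1) ?_
      show B.bmap (α_ p q r).hom (Mo.m (B.actR (Mo.m (B.actR a.2 b.1) (B.actL a.1 b.2)) c.1)
          (B.actL (G.gcomp a.1 b.1) c.2))
        = Mo.m (B.actR a.2 (G.gcomp b.1 c.1))
          (B.actL a.1 (Mo.m (B.actR b.2 c.1) (B.actL b.1 c.2)))
      rw [Mo.m_bmap, _hpres.actR_m, Mo.m_bmap, B.actL_comp, B.actLR,
        ← B.actR_comp, ← B.bmap_comp, Iso.inv_hom_id, B.bmap_id,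
        Mo.m_assoc, _hpres.actL_m]
    gpure_gcomp := by
      intro p X Y a
      refine Prod.ext (G.gpure_gcomp a.1) ?_
      show B.bmap _ (Mo.m (B.actR (Mo.e _ _ _) a.1) (B.actL (G.gpure (𝟙 X)) a.2)) = _
      rw [_hpres.actR_e, B.actL_pure, B.dimap_id, Mo.m_bmap, Mo.e_bmap,
        ← B.bmap_comp, Iso.inv_hom_id, B.bmap_id, Mo.m_unit_left]
    gcomp_gpure := by
      intro p X Y a
      refine Prod.ext (G.gcomp_gpure a.1) ?_
      show B.bmap _ (Mo.m (B.actR a.2 (G.gpure (𝟙 Y))) (B.actL a.1 (Mo.e _ _ _))) = _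
      rw [_hpres.actL_e, B.actR_pure, B.dimap_id, Mo.m_bmap, Mo.e_bmap,
        ← B.bmap_comp, Iso.inv_hom_id, B.bmap_id, Mo.m_unit_right]
  }, ?_, ?_, ?_, ?_, ?_, ?_⟩
  · intro p q X Y X' Y' a b
    refine Prod.ext (hG a.1 b.1) ?_
    show Mo.m (B.actR (B.st p X' a.2) (G.glst q Y b.1))
        (B.actL (G.st p X' a.1) (B.blst q Y b.2))
      = B.bmap (β_ q p).hom (Mo.m (B.actR (B.blst q X b.2) (G.st p Y' a.1))
        (B.actL (G.glst q X b.1) (B.st p Y' a.2)))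
    rw [Mo.m_bmap, ← hB, ← dual_comm G B hB, hMoComm]
  · intro p X X' Y Y' f g c; rfl
  · intro p X Y Z c; rfl
  · intro p q h X Y c; rfl
  · intro X Y f; rfl
  · intro p q X Y Z c d; rfl
end
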